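/- arXiv:1809.10925 — 9 statements merged into one kernel-verified Lean document; each statement's English description precedes it below -/
import Mathlib

section
/- The halfspace depth is upper semi-continuous in its first argument: for any probability measure P on ℝ^d and any x₀ ∈ ℝ^d, limsup_{x → x₀} HD(x;P) ≤ HD(x₀;P). In particular each level set { y : HD(y;P) ≥ δ } is closed. -/
open MeasureTheory Topology
open scoped ENNReal RealInnerProductSpace

/-- The closed halfspace `{z : ⟪z, u⟫ ≤ α}` in `ℝ^d`. -/
def hsp (d : ℕ) (u : EuclideanSpace ℝ (Fin d)) (α : ℝ) :
    Set (EuclideanSpace ℝ (Fin d)) := {z | ⟪z, u⟫ ≤ α}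

/-- The halfspace depth of `x` with respect to `P`. -/
noncomputable def HD {d : ℕ} (P : Measure (EuclideanSpace ℝ (Fin d)))
    (x : EuclideanSpace ℝ (Fin d)) : ℝ≥0∞ :=
  ⨅ (u : EuclideanSpace ℝ (Fin d)) (_ : u ≠ 0) (α : ℝ) (_ : x ∈ hsp d u α),
    P (hsp d u α)

lemma hsp_isClosed (d : ℕ) (u : EuclideanSpace ℝ (Fin d)) (α : ℝ) :
    IsClosed (hsp d u α) :=
  isClosed_le (Continuous.inner continuous_id continuous_const) continuous_const

lemma hsp_iInter (d : ℕ) (u : EuclideanSpace ℝ (Fin d)) (α : ℝ) :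
    ⋂ n : ℕ, hsp d u (α + 1 / (n + 1)) = hsp d u α := by
  ext z
  simp only [Set.mem_iInter, hsp, Set.mem_setOf_eq]
  constructor
  · intro h
    refine le_of_forall_pos_le_add fun ε hε => ?_
    obtain ⟨n, hn⟩ := exists_nat_one_div_lt hε
    exact (h n).trans (by nlinarith)
  · intro h n
    have : (0:ℝ) < 1 / (n + 1) := by positivity
    linarith

/-- The halfspace depth is upper semi-continuous in its first argument; in particular
each upper level set is closed. -/
theorem halfspace_depth_upperSemicontinuous {d : ℕ}
    (P : Measure (EuclideanSpace ℝ (Fin d))) [IsProbabilityMeasure P] :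
    UpperSemicontinuous (fun x => HD P x) ∧
    ∀ δ : ℝ≥0∞, IsClosed {y : EuclideanSpace ℝ (Fin d) | δ ≤ HD P y} := by
  have husc : UpperSemicontinuous (fun x => HD P x) := by
    intro x₀ c hc
    simp only [HD, iInf_lt_iff] at hc
    obtain ⟨u, hu, α, hxα, hPc⟩ := hc
    -- continuity from above
    have htend : Filter.Tendsto (fun n : ℕ => P (hsp d u (α + 1 / (n + 1))))
        Filter.atTop (𝓝 (P (hsp d u α))) := by
      have := tendsto_measure_iInter_atTop (μ := P)
        (s := fun n : ℕ => hsp d u (α + 1 / (n + 1)))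
        (fun n => ((hsp_isClosed d u _).measurableSet).nullMeasurableSet)
        (fun n m hnm => by
          intro z hz
          simp only [hsp, Set.mem_setOf_eq] at hz ⊢
          have h1 : (1:ℝ) / (m + 1) ≤ 1 / (n + 1) := by
            apply one_div_le_one_div_of_le (by positivity)
            exact_mod_cast by omega
          linarith)
        ⟨0, measure_ne_top P _⟩
      rw [hsp_iInter] at this; exact this
    obtain ⟨n, hn⟩ : ∃ n : ℕ, P (hsp d u (α + 1 / (n + 1))) < c := by
      have := htend.eventually_lt_const hPc
      exact this.exists
    set ε : ℝ := 1 / (n + 1) with hε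
    have hεpos : (0:ℝ) < ε := by positivity
    have hupos : (0:ℝ) < ‖u‖ := norm_pos_iff.mpr hu
    have : Metric.ball x₀ (ε / ‖u‖) ∈ 𝓝 x₀ :=
      Metric.ball_mem_nhds _ (by positivity)
    filter_upwards [this] with x hx
    have hxin : x ∈ hsp d u (α + ε) := by
      have h1 : ⟪x - x₀, u⟫ ≤ ‖x - x₀‖ * ‖u‖ := real_inner_le_norm _ _
      have h2 : ‖x - x₀‖ < ε / ‖u‖ := by
        rw [Metric.mem_ball, dist_eq_norm] at hx; exact hx
      have h3 : ‖x - x₀‖ * ‖u‖ < ε := by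
        rw [← lt_div_iff₀ hupos]; exact h2
      have h4 : ⟪x, u⟫ = ⟪x₀, u⟫ + ⟪x - x₀, u⟫ := by
        rw [inner_sub_left]; ring
      simp only [hsp, Set.mem_setOf_eq] at hxα ⊢
      rw [h4]; linarith
    calc HD P x ≤ P (hsp d u (α + ε)) := by
          exact iInf_le_of_le u (iInf_le_of_le hu (iInf_le_of_le (α + ε)
            (iInf_le_of_le hxin le_rfl)))
      _ < c := hn
  refine ⟨husc, fun δ => ?_⟩
  exact husc.isClosed_preimage δ
end

section
/- For any Borel probability measure P on ℝ^d, sup_{x∈ℝ^d} HD(x;P) ≥ 1/(d+1). -/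
open MeasureTheory
open scoped ENNReal RealInnerProductSpace

open Metric Filter Set

private lemma inner_left_isLinearMap {d : ℕ} (u : EuclideanSpace ℝ (Fin d)) :
    IsLinearMap ℝ (fun z : EuclideanSpace ℝ (Fin d) => ⟪z, u⟫) :=
  ⟨fun a b => inner_add_left a b u, fun c a => by
    rw [smul_eq_mul]; exact real_inner_smul_left a u c⟩

private lemma inner_left_continuous {d : ℕ} (u : EuclideanSpace ℝ (Fin d)) :
    Continuous (fun z : EuclideanSpace ℝ (Fin d) => ⟪z, u⟫) :=
  Continuous.inner continuous_id continuous_const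

/-- For any Borel probability measure `P` on `ℝ^d`, the maximal halfspace depth is at
least `1/(d+1)`. -/
theorem halfspace_depth_max_ge {d : ℕ}
    (P : Measure (EuclideanSpace ℝ (Fin d))) [IsProbabilityMeasure P] :
    ((d : ℝ≥0∞) + 1)⁻¹ ≤ ⨆ x : EuclideanSpace ℝ (Fin d), HD P x := by
  set E := EuclideanSpace ℝ (Fin d)
  set c : ℝ≥0∞ := ((d : ℝ≥0∞) + 1)⁻¹ with hc
  refine ENNReal.le_of_forall_pos_le_add fun ε hε _ => ?_
  suffices h : ∃ x : E, c ≤ HD P x + ε by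
    obtain ⟨x, hx⟩ := h
    exact hx.trans (add_le_add_left (le_iSup (HD P) x) _)
  set ε' : ℝ≥0∞ := (ε : ℝ≥0∞) / 2 with hε'
  have hε'top : ε' ≠ ⊤ := (ENNReal.div_lt_top ENNReal.coe_ne_top (by norm_num)).ne
  have hε'0 : ε' ≠ 0 := by
    simp [hε', ENNReal.div_eq_top, ENNReal.coe_eq_zero, hε.ne']
  have hε'ε : ε' + ε' = (ε : ℝ≥0∞) := ENNReal.add_halves _
  -- choose a big ball capturing all but ε' of the mass
  obtain ⟨R, hR⟩ : ∃ R : ℝ, P (closedBall (0 : E) R)ᶜ < ε' := by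
    have hmeas : ∀ n : ℕ, NullMeasurableSet ((closedBall (0 : E) (n : ℝ))ᶜ) P :=
      fun n => (isClosed_closedBall.isOpen_compl.measurableSet).nullMeasurableSet
    have hanti : Antitone (fun n : ℕ => (closedBall (0 : E) (n : ℝ))ᶜ) := by
      intro n m hnm
      exact compl_subset_compl.2 (closedBall_subset_closedBall (by exact_mod_cast hnm))
    have hiInter : ⋂ n : ℕ, (closedBall (0 : E) (n : ℝ))ᶜ = ∅ := by
      rw [eq_empty_iff_forall_notMem]
      intro z hz
      obtain ⟨n, hn⟩ := exists_nat_ge ‖z‖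
      exact (mem_iInter.1 hz n) (by simpa [mem_closedBall, dist_zero_right] using hn)
    have ht := tendsto_measure_iInter_atTop hmeas hanti ⟨0, measure_ne_top P _⟩
    rw [hiInter, measure_empty] at ht
    have := (ht.eventually_lt_const (by exact pos_iff_ne_zero.2 hε'0)).exists
    obtain ⟨n, hn⟩ := this
    exact ⟨n, hn⟩
  -- the index type for Helly's theorem
  set S : Type _ := {p : E × ℝ // p.1 ≠ 0 ∧ P {z : E | ⟪z, p.1⟫ < p.2} + ε' ≤ c} with hS
  set A : S → Set E := fun s => {z : E | ⟪z, s.1.1⟫ < s.1.2} with hA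
  set F : S → Set E := fun s => closedBall (0 : E) R ∩ {z : E | s.1.2 ≤ ⟪z, s.1.1⟫} with hF
  have hconv : ∀ s : S, Convex ℝ (F s) := fun s =>
    (convex_closedBall _ _).inter (convex_halfSpace_ge (inner_left_isLinearMap s.1.1) s.1.2)
  have hcomp : ∀ s : S, IsCompact (F s) :=
    fun s => (isCompact_closedBall _ _).inter_right
      (isClosed_le continuous_const (inner_left_continuous s.1.1))
  have hfinrank : Module.finrank ℝ E = d := finrank_euclideanSpace_fin
  have hdc : ((d : ℝ≥0∞) + 1) * c = 1 := by
    rw [hc]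
    exact ENNReal.mul_inv_cancel (lt_of_lt_of_le one_pos le_add_self).ne' (by simp)
  have hinter : ∀ I : Finset S, I.card ≤ Module.finrank ℝ E + 1 → (⋂ i ∈ I, F i).Nonempty := by
    intro I hIcard
    rw [hfinrank] at hIcard
    rcases I.eq_empty_or_nonempty with hIe | hIne
    · subst hIe
      simp only [Finset.notMem_empty, iInter_of_empty, iInter_univ]
      exact univ_nonempty
    by_contra hemp
    rw [not_nonempty_iff_eq_empty] at hemp
    have hcover : (univ : Set E) ⊆ (closedBall (0 : E) R)ᶜ ∪ ⋃ i ∈ I, A i := by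
      intro z _
      by_cases hzB : z ∈ closedBall (0 : E) R
      · right
        have hz : z ∉ ⋂ i ∈ I, F i := by rw [hemp]; exact notMem_empty z
        rw [mem_iInter₂] at hz
        push_neg at hz
        obtain ⟨i, hiI, hiz⟩ := hz
        refine mem_biUnion hiI ?_
        simp only [hA, mem_setOf_eq]
        by_contra hlt
        push_neg at hlt
        exact hiz ⟨hzB, hlt⟩
      · exact Or.inl hzB
    have h1 : (1 : ℝ≥0∞) ≤ P ((closedBall (0 : E) R)ᶜ ∪ ⋃ i ∈ I, A i) := by
      calc (1 : ℝ≥0∞) = P univ := (measure_univ (μ := P)).symm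
        _ ≤ _ := measure_mono hcover
    have h2 : P ((closedBall (0 : E) R)ᶜ ∪ ⋃ i ∈ I, A i)
        ≤ P ((closedBall (0 : E) R)ᶜ) + ∑ i ∈ I, P (A i) :=
      (measure_union_le _ _).trans (add_le_add_right (measure_biUnion_finset_le I A) _)
    have hsum : ∑ i ∈ I, (P (A i) + ε') ≤ (I.card : ℝ≥0∞) * c := by
      calc ∑ i ∈ I, (P (A i) + ε') ≤ ∑ _i ∈ I, c := Finset.sum_le_sum (fun i _ => i.2.2)
        _ = (I.card : ℝ≥0∞) * c := by rw [Finset.sum_const, nsmul_eq_mul]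
    have hsum' : ∑ i ∈ I, P (A i) + ε' ≤ 1 := by
      have hcard1 : (1 : ℝ≥0∞) ≤ (I.card : ℝ≥0∞) := by
        exact_mod_cast Nat.one_le_iff_ne_zero.2 (Finset.card_ne_zero_of_mem hIne.choose_spec)
      have e1 : ∑ i ∈ I, P (A i) + ε' ≤ ∑ i ∈ I, P (A i) + (I.card : ℝ≥0∞) * ε' := by
        gcongr
        calc ε' = 1 * ε' := (one_mul _).symm
          _ ≤ (I.card : ℝ≥0∞) * ε' := by gcongr
      have e2 : ∑ i ∈ I, P (A i) + (I.card : ℝ≥0∞) * ε' = ∑ i ∈ I, (P (A i) + ε') := by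
        rw [Finset.sum_add_distrib, Finset.sum_const, nsmul_eq_mul]
      have e3 : (I.card : ℝ≥0∞) * c ≤ ((d : ℝ≥0∞) + 1) * c := by
        gcongr
        exact_mod_cast hIcard
      calc ∑ i ∈ I, P (A i) + ε' ≤ ∑ i ∈ I, (P (A i) + ε') := e1.trans_eq e2
        _ ≤ (I.card : ℝ≥0∞) * c := hsum
        _ ≤ ((d : ℝ≥0∞) + 1) * c := e3
        _ = 1 := hdc
    have hlt : P ((closedBall (0 : E) R)ᶜ) + ∑ i ∈ I, P (A i)
        < ε' + ∑ i ∈ I, P (A i) := by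
      refine ENNReal.add_lt_add_right ?_ hR
      refine ne_of_lt ?_
      calc ∑ i ∈ I, P (A i) ≤ ∑ i ∈ I, P (A i) + ε' := le_self_add
        _ ≤ 1 := hsum'
        _ < ⊤ := by simp
    have : (1 : ℝ≥0∞) < 1 := by
      calc (1 : ℝ≥0∞) ≤ P ((closedBall (0 : E) R)ᶜ) + ∑ i ∈ I, P (A i) := h1.trans h2
        _ < ε' + ∑ i ∈ I, P (A i) := hlt
        _ = ∑ i ∈ I, P (A i) + ε' := add_comm _ _
        _ ≤ 1 := hsum'
    exact absurd this (lt_irrefl _)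
  obtain ⟨x, hxmem⟩ := Convex.helly_theorem_compact' (𝕜 := ℝ) hconv hcomp hinter
  refine ⟨x, ?_⟩
  have key : ∀ u : E, u ≠ 0 → ∀ α : ℝ, x ∈ hsp d u α → c ≤ P (hsp d u α) + ε := by
    intro u hu α hxα
    by_contra hcon
    push_neg at hcon
    -- continuity from above
    set B : ℕ → Set E := fun n => {z : E | ⟪z, u⟫ < α + 1 / (n + 1)} with hB
    have hBmeas : ∀ n, NullMeasurableSet (B n) P := fun n =>
      ((isOpen_lt (inner_left_continuous u) continuous_const).measurableSet).nullMeasurableSet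
    have hBanti : Antitone B := by
      intro n m hnm z hz
      simp only [hB, mem_setOf_eq] at hz ⊢
      refine lt_of_lt_of_le hz ?_
      have : (1 : ℝ) / (m + 1) ≤ 1 / (n + 1) := by
        apply one_div_le_one_div_of_le
        · positivity
        · exact_mod_cast Nat.succ_le_succ hnm
      linarith
    have hBiInter : ⋂ n, B n = hsp d u α := by
      ext z
      simp only [mem_iInter, hB, mem_setOf_eq, hsp]
      constructor
      · intro h
        by_contra hlt
        change ¬ ⟪z, u⟫ ≤ α at hlt
        push_neg at hlt
        obtain ⟨n, hn⟩ := exists_nat_one_div_lt (sub_pos.2 hlt)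
        have := h n
        linarith
      · intro h n
        change ⟪z, u⟫ ≤ α at h
        have : (0 : ℝ) < 1 / (n + 1) := by positivity
        linarith
    have ht := tendsto_measure_iInter_atTop hBmeas hBanti ⟨0, measure_ne_top P _⟩
    rw [hBiInter] at ht
    have hlt : P (hsp d u α) < P (hsp d u α) + ε' :=
      ENNReal.lt_add_right (measure_ne_top P _) hε'0
    obtain ⟨n, hn⟩ := (ht.eventually_lt_const hlt).exists
    simp only [Function.comp] at hn
    -- membership in S
    have hmem : P {z : E | ⟪z, u⟫ < α + 1 / (n + 1)} + ε' ≤ c := by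
      have h1 : P (B n) + ε' < (P (hsp d u α) + ε') + ε' :=
        ENNReal.add_lt_add_right hε'top hn
      rw [add_assoc, hε'ε] at h1
      exact le_of_lt (h1.trans hcon)
    have hx' := mem_iInter.1 hxmem ⟨(u, α + 1 / (n + 1)), hu, hmem⟩
    have hβx : α + 1 / (n + 1) ≤ ⟪x, u⟫ := hx'.2
    have hxb : ⟪x, u⟫ ≤ α := hxα
    have : (0 : ℝ) < 1 / ((n : ℝ) + 1) := by positivity
    linarith
  rw [HD]
  simp only [ENNReal.iInf_add]
  exact le_iInf fun u => le_iInf fun hu => le_iInf fun α => le_iInf fun hx' => key u hu α hx'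
end

section
/- The halfspace depth vanishes at infinity: for any Borel probability measure P on ℝ^d, lim_{M→∞} sup { HD(x;P) : ‖x‖ > M } = 0. Consequently, for every δ > 0 the level set { y : HD(y;P) ≥ δ } is bounded. -/
open MeasureTheory
open scoped ENNReal RealInnerProductSpace

lemma HD_le_tail {d : ℕ} (P : Measure (EuclideanSpace ℝ (Fin d)))
    {x : EuclideanSpace ℝ (Fin d)} (hx : x ≠ 0) :
    HD P x ≤ P {z | ‖x‖ ≤ ‖z‖} := by
  have hmem : x ∈ hsp d (-x) (-‖x‖ ^ 2) := by
    show ⟪x, -x⟫ ≤ -‖x‖ ^ 2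
    rw [inner_neg_right, real_inner_self_eq_norm_sq]
  have hsub : hsp d (-x) (-‖x‖ ^ 2) ⊆ {z | ‖x‖ ≤ ‖z‖} := by
    intro z hz
    simp only [hsp, Set.mem_setOf_eq, inner_neg_right, neg_le_neg_iff] at hz
    have hcs : ⟪z, x⟫ ≤ ‖z‖ * ‖x‖ := real_inner_le_norm z x
    have hx0 : (0:ℝ) < ‖x‖ := norm_pos_iff.2 hx
    have : ‖x‖ * ‖x‖ ≤ ‖z‖ * ‖x‖ := by nlinarith
    exact le_of_mul_le_mul_right this hx0
  calc HD P x ≤ P (hsp d (-x) (-‖x‖ ^ 2)) := by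
        refine iInf_le_of_le (-x) (iInf_le_of_le (by simpa using hx)
          (iInf_le_of_le (-‖x‖ ^ 2) (iInf_le_of_le hmem le_rfl)))
    _ ≤ _ := measure_mono hsub

open Filter in
lemma tail_tendsto {d : ℕ} (P : Measure (EuclideanSpace ℝ (Fin d)))
    [IsProbabilityMeasure P] :
    Tendsto (fun M : ℝ => P {z | M ≤ ‖z‖}) atTop (nhds 0) := by
  have h := tendsto_measure_iInter_atTop (μ := P)
    (s := fun M : ℝ => {z | M ≤ ‖z‖})
    (fun M => (isClosed_le continuous_const continuous_norm).measurableSet.nullMeasurableSet)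
    (fun a b hab z hz => le_trans hab hz)
    ⟨0, measure_ne_top P _⟩
  have hempty : (⋂ M : ℝ, {z : EuclideanSpace ℝ (Fin d) | M ≤ ‖z‖}) = ∅ := by
    ext z
    simp only [Set.mem_iInter, Set.mem_setOf_eq, Set.mem_empty_iff_false, iff_false, not_forall]
    exact ⟨‖z‖ + 1, by push_neg; linarith⟩
  rw [hempty] at h
  simpa [Function.comp_def] using h

lemma sup_le_tail {d : ℕ} (P : Measure (EuclideanSpace ℝ (Fin d)))
    {M : ℝ} (hM : 0 ≤ M) :
    (⨆ (x : EuclideanSpace ℝ (Fin d)) (_ : M < ‖x‖), HD P x) ≤ P {z | M ≤ ‖z‖} := by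
  refine iSup₂_le fun x hx => ?_
  have hx0 : x ≠ 0 := by
    intro h; rw [h, norm_zero] at hx; linarith
  exact (HD_le_tail P hx0).trans (measure_mono fun z hz => le_trans hx.le hz)


open Filter in
/-- The halfspace depth vanishes at infinity; consequently every positive level set
is bounded. -/
theorem halfspace_depth_vanishes_at_infinity {d : ℕ}
    (P : Measure (EuclideanSpace ℝ (Fin d))) [IsProbabilityMeasure P] :
    Tendsto (fun M : ℝ => ⨆ (x : EuclideanSpace ℝ (Fin d)) (_ : M < ‖x‖), HD P x)
      atTop (nhds 0) ∧
    ∀ δ : ℝ≥0∞, 0 < δ →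
      Bornology.IsBounded {y : EuclideanSpace ℝ (Fin d) | δ ≤ HD P y} := by
  constructor
  · refine tendsto_of_tendsto_of_tendsto_of_le_of_le' tendsto_const_nhds
      (tail_tendsto P) (Eventually.of_forall fun M => zero_le) ?_
    filter_upwards [eventually_ge_atTop (0:ℝ)] with M hM
    exact sup_le_tail P hM
  · intro δ hδ
    obtain ⟨M, hM0, hMδ⟩ :
        ∃ M : ℝ, 0 ≤ M ∧ P {z | M ≤ ‖z‖} < δ := by
      have h1 := (tail_tendsto P).eventually_lt_const hδ
      obtain ⟨M, hM⟩ := (h1.and (eventually_ge_atTop (0:ℝ))).exists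
      exact ⟨M, hM.2, hM.1⟩
    refine (Metric.isBounded_closedBall (x := (0 : EuclideanSpace ℝ (Fin d))) (r := M)).subset
      fun y hy => ?_
    simp only [Set.mem_setOf_eq] at hy
    rw [Metric.mem_closedBall, dist_zero_right]
    by_contra h
    push_neg at h
    have hy0 : y ≠ 0 := by
      intro h0; rw [h0, norm_zero] at h; linarith
    have : HD P y < δ := lt_of_le_of_lt
      ((HD_le_tail P hy0).trans (measure_mono fun z hz => le_trans h.le hz)) hMδ
    exact absurd hy this.not_ge
end

section
/- If P is the uniform probability distribution on the closed unit ball in ℝ^d, then for every x ∈ ℝ^d one has HD(x;P) = F₁(−‖x‖), where F₁ is the cumulative distribution function of the first coordinate of a uniform random point on the unit ball, i.e. F₁(s) = (Γ((d+2)/2)/(Γ((d+1)/2)√π)) ∫_{−1}^{s} (1−t²)^{(d−1)/2} dt for s ∈ [−1,1], F₁(s)=0 for s ≤ −1 and F₁(s)=1 for s ≥ 1. -/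
open MeasureTheory Real
open scoped ENNReal RealInnerProductSpace

lemma pi_sum_sq_vol (n : ℕ) (R : ℝ) (hR : 0 ≤ R) :
    volume {y : Fin n → ℝ | ∑ i, y i ^ 2 ≤ R} =
      ENNReal.ofReal (R ^ ((n : ℝ) / 2) * (Real.sqrt π ^ n / Real.Gamma (n / 2 + 1))) := by
  rcases Nat.eq_zero_or_pos n with hn | hn
  · subst hn
    have h1 : {y : Fin 0 → ℝ | ∑ i, y i ^ 2 ≤ R} = Set.univ := by
      ext y; simp [hR]
    rw [h1]
    rw [volume_pi, Measure.pi_univ]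
    simp [Real.Gamma_one]
  · have hne : Nonempty (Fin n) := Fin.pos_iff_nonempty.mp hn
    have key : {y : Fin n → ℝ | ∑ i, y i ^ 2 ≤ R} =
        (MeasurableEquiv.toLp 2 (Fin n → ℝ)).symm.symm ⁻¹'
          (Metric.closedBall (0 : EuclideanSpace ℝ (Fin n)) (Real.sqrt R)) := by
      ext y
      simp only [Set.mem_setOf_eq, Set.mem_preimage, Metric.mem_closedBall, dist_zero_right]
      rw [EuclideanSpace.norm_eq]
      constructor
      · intro h
        have : ((MeasurableEquiv.toLp 2 (Fin n → ℝ)).symm.symm y : EuclideanSpace ℝ (Fin n)) = WithLp.toLp 2 y := rfl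
        rw [this]
        simp only [Real.norm_eq_abs, sq_abs]
        exact Real.sqrt_le_sqrt h
      · intro h
        have hy : ((MeasurableEquiv.toLp 2 (Fin n → ℝ)).symm.symm y : EuclideanSpace ℝ (Fin n)) = WithLp.toLp 2 y := rfl
        rw [hy] at h
        simp only [Real.norm_eq_abs, sq_abs] at h
        have := (Real.sqrt_le_sqrt_iff (by positivity)).mp h
        exact this
    rw [key, ((EuclideanSpace.volume_preserving_symm_measurableEquiv_toLp (Fin n)).symm).measure_preimage
      measurableSet_closedBall.nullMeasurableSet,
      EuclideanSpace.volume_closedBall]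
    rw [Fintype.card_fin, ← ENNReal.ofReal_pow (Real.sqrt_nonneg R), ← ENNReal.ofReal_mul (by positivity)]
    congr 2
    rw [Real.sqrt_eq_rpow, ← Real.rpow_natCast (R ^ (1/2 : ℝ)) n, ← Real.rpow_mul hR]
    ring_nf


lemma cap_vol_coord (n : ℕ) (s : ℝ) (hs : -1 ≤ s) (hs1 : s ≤ 1) :
    volume {z : EuclideanSpace ℝ (Fin (n+1)) | ‖z‖ ≤ 1 ∧ z 0 ≤ s} =
      ENNReal.ofReal ((Real.sqrt π ^ n / Real.Gamma (n / 2 + 1)) *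
        ∫ t in (-1:ℝ)..s, (1 - t ^ 2) ^ ((n : ℝ) / 2)) := by
  set c : ℝ := Real.sqrt π ^ n / Real.Gamma (n / 2 + 1) with hc
  have hc0 : 0 ≤ c := by
    have := Real.Gamma_pos_of_pos (show (0:ℝ) < n / 2 + 1 by positivity)
    positivity
  -- the set in pi coordinates
  set A : Set (Fin (n+1) → ℝ) := {y | ∑ i, y i ^ 2 ≤ 1 ∧ y 0 ≤ s} with hA
  have hm1 : Measurable fun y : Fin (n+1) → ℝ => ∑ i, y i ^ 2 :=
    Finset.univ.measurable_sum fun i _ => (measurable_pi_apply i).pow_const 2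
  have hAm : MeasurableSet A :=
    (measurableSet_le hm1 measurable_const).inter
      (measurableSet_le (measurable_pi_apply 0) measurable_const)
  have step1 : volume {z : EuclideanSpace ℝ (Fin (n+1)) | ‖z‖ ≤ 1 ∧ z 0 ≤ s} = volume A := by
    have hset : {z : EuclideanSpace ℝ (Fin (n+1)) | ‖z‖ ≤ 1 ∧ z 0 ≤ s} =
        ((MeasurableEquiv.toLp 2 (Fin (n+1) → ℝ)).symm) ⁻¹' A := by
      ext z
      simp only [Set.mem_setOf_eq, Set.mem_preimage, hA]
      have hz : (MeasurableEquiv.toLp 2 (Fin (n+1) → ℝ)).symm z = WithLp.ofLp z := rfl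
      rw [hz, EuclideanSpace.norm_eq]
      constructor
      · rintro ⟨h1, h2⟩
        refine ⟨?_, h2⟩
        have := Real.sq_sqrt (show (0:ℝ) ≤ ∑ i, z i ^ 2 by positivity)
        calc ∑ i, z i ^ 2 = Real.sqrt (∑ i, z i ^ 2) ^ 2 := this.symm
          _ ≤ 1 ^ 2 := by
              apply pow_le_pow_left₀ (Real.sqrt_nonneg _)
              simpa [Real.norm_eq_abs, sq_abs] using h1
          _ = 1 := one_pow 2
      · rintro ⟨h1, h2⟩
        refine ⟨?_, h2⟩
        calc Real.sqrt (∑ i, ‖z i‖ ^ 2) = Real.sqrt (∑ i, z i ^ 2) := by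
              simp [Real.norm_eq_abs, sq_abs]
          _ ≤ Real.sqrt 1 := Real.sqrt_le_sqrt h1
          _ = 1 := Real.sqrt_one
    rw [hset,
      (EuclideanSpace.volume_preserving_symm_measurableEquiv_toLp (Fin (n+1))).measure_preimage
        hAm.nullMeasurableSet]
  -- split off first coordinate
  set A' : Set (ℝ × (Fin n → ℝ)) := {p | p.1 ^ 2 + ∑ i, p.2 i ^ 2 ≤ 1 ∧ p.1 ≤ s} with hA'
  have hm2 : Measurable fun p : ℝ × (Fin n → ℝ) => p.1 ^ 2 + ∑ i, p.2 i ^ 2 :=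
    (measurable_fst.pow_const 2).add
      (Finset.univ.measurable_sum fun i _ => ((measurable_pi_apply i).comp measurable_snd).pow_const 2)
  have hA'm : MeasurableSet A' :=
    (measurableSet_le hm2 measurable_const).inter
      (measurableSet_le measurable_fst measurable_const)
  have step2 : volume A = ((volume : Measure ℝ).prod (volume : Measure (Fin n → ℝ))) A' := by
    have hset : A = (MeasurableEquiv.piFinSuccAbove (fun _ : Fin (n+1) => ℝ) 0) ⁻¹' A' := by
      ext y
      simp only [hA, hA', Set.mem_setOf_eq, Set.mem_preimage,
        MeasurableEquiv.piFinSuccAbove_apply, Fin.insertNthEquiv,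
        Equiv.coe_fn_symm_mk]
      rw [Fin.sum_univ_succAbove (fun i => y i ^ 2) 0]
      rfl
    rw [hset,
      (volume_preserving_piFinSuccAbove (fun _ : Fin (n+1) => ℝ) 0).measure_preimage
        hA'm.nullMeasurableSet]
    rfl
  rw [step1, step2, Measure.prod_apply hA'm]
  -- compute the slices
  have slice : ∀ t : ℝ, volume (Prod.mk t ⁻¹' A') =
      Set.indicator (Set.Icc (-1) s) (fun t => ENNReal.ofReal ((1 - t ^ 2) ^ ((n:ℝ)/2) * c)) t := by
    intro t
    rcases le_or_gt t s with hts | hts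
    · rcases le_or_gt (-1) t with h1t | h1t
      · rw [Set.indicator_of_mem (Set.mem_Icc.mpr ⟨h1t, hts⟩)]
        have hset : (Prod.mk t ⁻¹' A') = {y : Fin n → ℝ | ∑ i, y i ^ 2 ≤ 1 - t ^ 2} := by
          ext y
          simp only [hA', Set.mem_preimage, Set.mem_setOf_eq]
          constructor
          · rintro ⟨h, -⟩; linarith
          · intro h; exact ⟨by linarith, hts⟩
        have ht2 : t ^ 2 ≤ 1 := by
          have : |t| ≤ 1 := abs_le.mpr ⟨h1t, le_trans hts hs1⟩
          calc t ^ 2 = |t| ^ 2 := (sq_abs t).symm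
            _ ≤ 1 ^ 2 := pow_le_pow_left₀ (abs_nonneg t) this 2
            _ = 1 := one_pow 2
        rw [hset, pi_sum_sq_vol n _ (by linarith)]
      · rw [Set.indicator_of_notMem (by simp [Set.mem_Icc]; intro h; linarith)]
        have hset : (Prod.mk t ⁻¹' A') = ∅ := by
          ext y
          simp only [hA', Set.mem_preimage, Set.mem_setOf_eq, Set.mem_empty_iff_false,
            iff_false, not_and]
          intro h
          have h2 : (1:ℝ) < t ^ 2 := by nlinarith
          have h3 : (0:ℝ) ≤ ∑ i, y i ^ 2 := by positivity
          linarith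
        rw [hset, measure_empty]
    · rw [Set.indicator_of_notMem (by simp [Set.mem_Icc]; intro h; linarith)]
      have hset : (Prod.mk t ⁻¹' A') = ∅ := by
        ext y
        simp only [hA', Set.mem_preimage, Set.mem_setOf_eq, Set.mem_empty_iff_false,
          iff_false, not_and]
        intro _; linarith
      rw [hset, measure_empty]
  rw [lintegral_congr slice]
  rw [lintegral_indicator]
  swap
  · exact measurableSet_Icc
  -- turn the lintegral into a real integral
  have hcont : Continuous (fun t : ℝ => (1 - t ^ 2) ^ ((n:ℝ)/2) * c) := by
    exact ((Real.continuous_rpow_const (by positivity)).comp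
      (continuous_const.sub (continuous_pow 2))).mul continuous_const
  have hint : IntegrableOn (fun t : ℝ => (1 - t ^ 2) ^ ((n:ℝ)/2) * c) (Set.Icc (-1) s) volume :=
    hcont.integrableOn_Icc
  rw [← ofReal_integral_eq_lintegral_ofReal hint ?_]
  · rw [MeasureTheory.integral_Icc_eq_integral_Ioc,
      ← intervalIntegral.integral_of_le hs, intervalIntegral.integral_mul_const]
    congr 1
    ring
  · filter_upwards [ae_restrict_mem measurableSet_Icc] with t ht
    have : (0:ℝ) ≤ 1 - t ^ 2 := by
      rcases Set.mem_Icc.mp ht with ⟨h1, h2⟩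
      nlinarith [le_trans h2 hs1]
    positivity


lemma cap_vol_rot (n : ℕ) (u : EuclideanSpace ℝ (Fin (n+1))) (hu : ‖u‖ = 1) (α : ℝ) :
    volume {z : EuclideanSpace ℝ (Fin (n+1)) | ‖z‖ ≤ 1 ∧ ⟪z, u⟫ ≤ α} =
      volume {z : EuclideanSpace ℝ (Fin (n+1)) | ‖z‖ ≤ 1 ∧ z 0 ≤ α} := by
  have card : Module.finrank ℝ (EuclideanSpace ℝ (Fin (n+1))) = Fintype.card (Fin (n+1)) := by
    simp [finrank_euclideanSpace]
  have horth : Orthonormal ℝ (({0} : Set (Fin (n+1))).restrict (fun _ => u)) := by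
    constructor
    · intro i; exact hu
    · intro i j hij
      exfalso
      apply hij
      ext
      rw [i.2, j.2]
  obtain ⟨b, hb⟩ := Orthonormal.exists_orthonormalBasis_extension_of_card_eq card horth
  have hb0 : b 0 = u := hb 0 rfl
  have hmeas : MeasurableSet {w : EuclideanSpace ℝ (Fin (n+1)) | ‖w‖ ≤ 1 ∧ w 0 ≤ α} := by
    refine MeasurableSet.inter ?_ ?_
    · exact measurableSet_le continuous_norm.measurable measurable_const
    · exact measurableSet_le
        ((measurable_pi_apply 0).comp ((MeasurableEquiv.toLp 2 (Fin (n+1) → ℝ)).symm).measurable)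
        measurable_const
  have hset : {z : EuclideanSpace ℝ (Fin (n+1)) | ‖z‖ ≤ 1 ∧ ⟪z, u⟫ ≤ α} =
      b.repr ⁻¹' {w : EuclideanSpace ℝ (Fin (n+1)) | ‖w‖ ≤ 1 ∧ w 0 ≤ α} := by
    ext z
    simp only [Set.mem_setOf_eq, Set.mem_preimage]
    rw [b.repr.norm_map, OrthonormalBasis.repr_apply_apply, hb0, real_inner_comm]
  rw [hset, b.measurePreserving_repr.measure_preimage hmeas.nullMeasurableSet]


lemma gamma_const (n : ℕ) :
    Real.sqrt π ^ n / Real.Gamma ((n:ℝ) / 2 + 1) =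
      (Real.Gamma (((n:ℝ) + 3) / 2) / (Real.Gamma (((n:ℝ) + 2) / 2) * Real.sqrt π)) *
        (Real.sqrt π ^ (n+1) / Real.Gamma (((n:ℝ) + 1) / 2 + 1)) := by
  have h1 : (n:ℝ)/2 + 1 = ((n:ℝ)+2)/2 := by ring
  have h2 : ((n:ℝ)+1)/2 + 1 = ((n:ℝ)+3)/2 := by ring
  rw [h1, h2]
  have hg2 : Real.Gamma (((n:ℝ)+2)/2) ≠ 0 := (Real.Gamma_pos_of_pos (by positivity)).ne'
  have hg3 : Real.Gamma (((n:ℝ)+3)/2) ≠ 0 := (Real.Gamma_pos_of_pos (by positivity)).ne'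
  have hsq : Real.sqrt π ≠ 0 := by positivity
  field_simp
  ring


/-- For the uniform distribution on the unit ball in `ℝ^d`, the halfspace depth is
`F₁(-‖x‖)`, with `F₁` the c.d.f. of the first coordinate. -/
theorem halfspace_depth_unit_ball {d : ℕ} (hd : 0 < d)
    (P : Measure (EuclideanSpace ℝ (Fin d)))
    (hP : P = (volume (Metric.closedBall (0 : EuclideanSpace ℝ (Fin d)) 1))⁻¹ •
      volume.restrict (Metric.closedBall (0 : EuclideanSpace ℝ (Fin d)) 1))
    (F1 : ℝ → ℝ)
    (hF1 : ∀ s : ℝ, F1 s =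
      if s ≤ -1 then 0 else if 1 ≤ s then 1 else
        (Real.Gamma (((d : ℝ) + 2) / 2) /
          (Real.Gamma (((d : ℝ) + 1) / 2) * Real.sqrt Real.pi)) *
          ∫ t in (-1 : ℝ)..s, (1 - t ^ 2) ^ (((d : ℝ) - 1) / 2)) :
    ∀ x : EuclideanSpace ℝ (Fin d), HD P x = ENNReal.ofReal (F1 (-‖x‖)) := by
  obtain ⟨n, rfl⟩ : ∃ n, d = n + 1 := ⟨d - 1, (Nat.succ_pred_eq_of_pos hd).symm⟩
  set c : ℝ := Real.sqrt π ^ n / Real.Gamma ((n:ℝ)/2 + 1) with hc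
  set v : ℝ := Real.sqrt π ^ (n+1) / Real.Gamma (((n:ℝ)+1)/2 + 1) with hv
  set K : ℝ := Real.Gamma (((n:ℝ)+3)/2) / (Real.Gamma (((n:ℝ)+2)/2) * Real.sqrt π) with hK
  set I : ℝ → ℝ := fun s => ∫ t in (-1:ℝ)..s, (1 - t^2) ^ ((n:ℝ)/2) with hI
  have hv0 : 0 < v := by
    rw [hv]
    have := Real.Gamma_pos_of_pos (show (0:ℝ) < ((n:ℝ)+1)/2 + 1 by positivity)
    have hπ : (0:ℝ) < Real.sqrt π := Real.sqrt_pos.mpr Real.pi_pos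
    positivity
  have hK0 : 0 ≤ K := by
    rw [hK]
    have h2 := Real.Gamma_pos_of_pos (show (0:ℝ) < ((n:ℝ)+2)/2 by positivity)
    have h3 := Real.Gamma_pos_of_pos (show (0:ℝ) < ((n:ℝ)+3)/2 by positivity)
    have hπ : (0:ℝ) < Real.sqrt π := Real.sqrt_pos.mpr Real.pi_pos
    positivity
  have hVol : volume (Metric.closedBall (0 : EuclideanSpace ℝ (Fin (n+1))) 1)
      = ENNReal.ofReal v := by
    rw [EuclideanSpace.volume_closedBall]
    simp only [Fintype.card_fin, ENNReal.ofReal_one, one_pow, one_mul]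
    rw [hv]
    congr 2
    push_cast
    ring
  -- reduction of F1
  have hF1val : ∀ s : ℝ, -1 < s → s < 1 → F1 s = K * I s := by
    intro s h1 h2
    rw [hF1 s, if_neg (by linarith), if_neg (by linarith)]
    have e1 : (((n+1 : ℕ):ℝ) + 2)/2 = ((n:ℝ)+3)/2 := by push_cast; ring
    have e2 : (((n+1 : ℕ):ℝ) + 1)/2 = ((n:ℝ)+2)/2 := by push_cast; ring
    have e3 : (((n+1 : ℕ):ℝ) - 1)/2 = (n:ℝ)/2 := by push_cast; ring
    rw [e1, e2, e3, hK, hI]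
  have F1zero : ∀ s : ℝ, s ≤ -1 → F1 s = 0 := fun s hs => by rw [hF1 s, if_pos hs]
  -- integrand facts
  have hcont : Continuous (fun t : ℝ => (1 - t^2) ^ ((n:ℝ)/2)) :=
    (Real.continuous_rpow_const (by positivity)).comp (continuous_const.sub (continuous_pow 2))
  have Inn : ∀ s : ℝ, -1 ≤ s → s ≤ 1 → 0 ≤ I s := by
    intro s h1 h2
    rw [hI]
    refine intervalIntegral.integral_nonneg h1 (fun t ht => Real.rpow_nonneg ?_ _)
    nlinarith [ht.1, ht.2]
  have Imono : ∀ s s' : ℝ, -1 ≤ s → s ≤ s' → s' ≤ 1 → I s ≤ I s' := by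
    intro s s' h1 h2 h3
    have i1 : IntervalIntegrable (fun t : ℝ => (1 - t^2) ^ ((n:ℝ)/2)) volume (-1) s :=
      hcont.intervalIntegrable _ _
    have i2 : IntervalIntegrable (fun t : ℝ => (1 - t^2) ^ ((n:ℝ)/2)) volume s s' :=
      hcont.intervalIntegrable _ _
    have hadd := intervalIntegral.integral_add_adjacent_intervals i1 i2
    have h4 : 0 ≤ ∫ t in s..s', (1-t^2)^((n:ℝ)/2) := by
      refine intervalIntegral.integral_nonneg h2 (fun t ht => Real.rpow_nonneg ?_ _)
      nlinarith [ht.1, ht.2]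
    rw [hI]
    simp only
    linarith [hadd]
  -- cap volumes
  have capvol : ∀ (u : EuclideanSpace ℝ (Fin (n+1))), ‖u‖ = 1 → ∀ s : ℝ, -1 ≤ s → s ≤ 1 →
      volume {z : EuclideanSpace ℝ (Fin (n+1)) | ‖z‖ ≤ 1 ∧ ⟪z, u⟫ ≤ s}
        = ENNReal.ofReal (c * I s) := by
    intro u hu s h1 h2
    rw [cap_vol_rot n u hu s, cap_vol_coord n s h1 h2]
  have hBcap : ∀ u : EuclideanSpace ℝ (Fin (n+1)), ‖u‖ = 1 →
      Metric.closedBall (0 : EuclideanSpace ℝ (Fin (n+1))) 1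
        = {z : EuclideanSpace ℝ (Fin (n+1)) | ‖z‖ ≤ 1 ∧ ⟪z, u⟫ ≤ 1} := by
    intro u hu
    ext z
    simp only [Metric.mem_closedBall, dist_zero_right, Set.mem_setOf_eq]
    constructor
    · intro h
      refine ⟨h, le_trans (real_inner_le_norm z u) ?_⟩
      rw [hu, mul_one]; exact h
    · rintro ⟨h, -⟩; exact h
  have hu₀ : ‖(EuclideanSpace.single (0 : Fin (n+1)) (1:ℝ))‖ = 1 := by
    rw [EuclideanSpace.norm_single]; norm_num
  have hcv : c * I 1 = v := by
    have h := capvol _ hu₀ 1 (by norm_num) le_rfl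
    rw [← hBcap _ hu₀, hVol] at h
    have hcnn : 0 ≤ c * I 1 := by
      have hc0 : 0 ≤ c := by
        rw [hc]
        have := Real.Gamma_pos_of_pos (show (0:ℝ) < (n:ℝ)/2 + 1 by positivity)
        positivity
      exact mul_nonneg hc0 (Inn 1 (by norm_num) le_rfl)
    exact ((ENNReal.ofReal_eq_ofReal_iff hv0.le hcnn).mp h).symm
  have hcK : c = K * v := by rw [hc, hv, hK]; exact gamma_const n
  have hKI1 : K * I 1 = 1 := by
    have h := hcv
    rw [hcK] at h
    have h2 : (K * I 1) * v = 1 * v := by linear_combination h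
    exact mul_right_cancel₀ hv0.ne' h2
  -- measure of halfspaces
  have Pmeas : ∀ (u : EuclideanSpace ℝ (Fin (n+1))) (α : ℝ), MeasurableSet (hsp (n+1) u α) :=
    fun u α => measurableSet_le (continuous_id.inner continuous_const).measurable
      measurable_const
  have Pval : ∀ (u : EuclideanSpace ℝ (Fin (n+1))), ∀ s : ℝ,
      P (hsp (n+1) u s) = (ENNReal.ofReal v)⁻¹ *
        volume {z : EuclideanSpace ℝ (Fin (n+1)) | ‖z‖ ≤ 1 ∧ ⟪z, u⟫ ≤ s} := by
    intro u s
    have hseteq : hsp (n+1) u s ∩ Metric.closedBall (0 : EuclideanSpace ℝ (Fin (n+1))) 1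
        = {z : EuclideanSpace ℝ (Fin (n+1)) | ‖z‖ ≤ 1 ∧ ⟪z, u⟫ ≤ s} := by
      ext z
      simp only [hsp, Set.mem_inter_iff, Set.mem_setOf_eq, Metric.mem_closedBall,
        dist_zero_right]
      tauto
    rw [hP, Measure.smul_apply, smul_eq_mul, Measure.restrict_apply (Pmeas u s), hseteq, hVol]
  have Pval2 : ∀ (u : EuclideanSpace ℝ (Fin (n+1))), ‖u‖ = 1 → ∀ s : ℝ, -1 ≤ s → s ≤ 1 →
      P (hsp (n+1) u s) = ENNReal.ofReal (K * I s) := by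
    intro u hu s h1 h2
    rw [Pval u s, capvol u hu s h1 h2, hcK,
      show K * v * I s = v * (K * I s) by ring, ENNReal.ofReal_mul hv0.le, ← mul_assoc,
      ENNReal.inv_mul_cancel (ENNReal.ofReal_pos.mpr hv0).ne' ENNReal.ofReal_ne_top, one_mul]
  have Plow : ∀ (u : EuclideanSpace ℝ (Fin (n+1))), ‖u‖ = 1 → ∀ s : ℝ, s ≤ -1 →
      P (hsp (n+1) u s) = 0 := by
    intro u hu s hs
    rcases eq_or_lt_of_le hs with h | h
    · subst h
      rw [Pval2 u hu (-1) le_rfl (by norm_num)]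
      have hI1 : I (-1) = 0 := by rw [hI]; simp
      rw [hI1, mul_zero, ENNReal.ofReal_zero]
    · rw [Pval u s]
      have hempty : {z : EuclideanSpace ℝ (Fin (n+1)) | ‖z‖ ≤ 1 ∧ ⟪z, u⟫ ≤ s} = ∅ := by
        ext z
        simp only [Set.mem_setOf_eq, Set.mem_empty_iff_false, iff_false, not_and]
        intro h1
        have hneg := real_inner_le_norm z (-u)
        rw [inner_neg_right, norm_neg, hu, mul_one] at hneg
        intro h2
        linarith
      rw [hempty, measure_empty, mul_zero]
  have Phigh : ∀ (u : EuclideanSpace ℝ (Fin (n+1))), ‖u‖ = 1 → ∀ s : ℝ, 1 ≤ s →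
      P (hsp (n+1) u s) = 1 := by
    intro u hu s hs
    rw [Pval u s]
    have hfull : {z : EuclideanSpace ℝ (Fin (n+1)) | ‖z‖ ≤ 1 ∧ ⟪z, u⟫ ≤ s}
        = Metric.closedBall (0 : EuclideanSpace ℝ (Fin (n+1))) 1 := by
      ext z
      simp only [Set.mem_setOf_eq, Metric.mem_closedBall, dist_zero_right]
      constructor
      · rintro ⟨h, -⟩; exact h
      · intro h
        refine ⟨h, le_trans (real_inner_le_norm z u) ?_⟩
        rw [hu, mul_one]; linarith
    rw [hfull, hVol, ENNReal.inv_mul_cancel (ENNReal.ofReal_pos.mpr hv0).ne'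
      ENNReal.ofReal_ne_top]
  -- normalization
  have hnorm : ∀ (u : EuclideanSpace ℝ (Fin (n+1))), u ≠ 0 → ∀ α : ℝ,
      hsp (n+1) u α = hsp (n+1) (‖u‖⁻¹ • u) (α / ‖u‖) := by
    intro u hu α
    have h0 : (0:ℝ) < ‖u‖ := norm_pos_iff.mpr hu
    ext z
    simp only [hsp, Set.mem_setOf_eq, real_inner_smul_right]
    rw [div_eq_inv_mul, mul_le_mul_iff_right₀ (inv_pos.mpr h0)]
  have hunit : ∀ (u : EuclideanSpace ℝ (Fin (n+1))), u ≠ 0 → ‖(‖u‖⁻¹ • u)‖ = 1 := by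
    intro u hu
    rw [norm_smul, norm_inv, norm_norm, inv_mul_cancel₀ (norm_ne_zero_iff.mpr hu)]
  intro x
  apply le_antisymm
  · -- upper bound
    obtain ⟨u, hu1, hxu⟩ : ∃ u : EuclideanSpace ℝ (Fin (n+1)), ‖u‖ = 1 ∧ ⟪x, u⟫ = -‖x‖ := by
      by_cases hx : x = 0
      · exact ⟨EuclideanSpace.single 0 1, hu₀, by simp [hx]⟩
      · refine ⟨-(‖x‖⁻¹ • x), ?_, ?_⟩
        · rw [norm_neg, norm_smul, norm_inv, norm_norm,
            inv_mul_cancel₀ (norm_ne_zero_iff.mpr hx)]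
        · rw [inner_neg_right, real_inner_smul_right, real_inner_self_eq_norm_sq]
          have : ‖x‖ ≠ 0 := norm_ne_zero_iff.mpr hx
          field_simp
    have hu0 : u ≠ 0 := by intro h; rw [h, norm_zero] at hu1; norm_num at hu1
    have hmem : x ∈ hsp (n+1) u (-‖x‖) := by
      simp only [hsp, Set.mem_setOf_eq, hxu, le_refl]
    have hle : HD P x ≤ P (hsp (n+1) u (-‖x‖)) := by
      unfold HD
      exact iInf_le_of_le u (iInf_le_of_le hu0 (iInf_le_of_le (-‖x‖) (iInf_le _ hmem)))
    refine le_trans hle (le_of_eq ?_)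
    by_cases hx1 : 1 ≤ ‖x‖
    · rw [Plow u hu1 _ (by linarith), F1zero _ (by linarith), ENNReal.ofReal_zero]
    · push_neg at hx1
      have hn0 : (0:ℝ) ≤ ‖x‖ := norm_nonneg x
      rw [Pval2 u hu1 _ (by linarith) (by linarith), hF1val _ (by linarith) (by linarith)]
  · -- lower bound
    unfold HD
    refine le_iInf fun u => le_iInf fun hu0 => le_iInf fun α => le_iInf fun hmem => ?_
    have h0 : (0:ℝ) < ‖u‖ := norm_pos_iff.mpr hu0
    rw [hnorm u hu0 α]
    set w : EuclideanSpace ℝ (Fin (n+1)) := ‖u‖⁻¹ • u with hwdef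
    set s₀ : ℝ := α / ‖u‖ with hs0def
    have hw : ‖w‖ = 1 := hunit u hu0
    have hmem' : ⟪x, u⟫ ≤ α := hmem
    have hs₀ : -‖x‖ ≤ s₀ := by
      have h1 : ⟪x, w⟫ ≤ s₀ := by
        rw [hwdef, hs0def, real_inner_smul_right, div_eq_inv_mul]
        exact mul_le_mul_of_nonneg_left hmem' (inv_nonneg.mpr h0.le)
      have h2 : -‖x‖ ≤ ⟪x, w⟫ := by
        have := real_inner_le_norm x (-w)
        rw [inner_neg_right, norm_neg, hw, mul_one] at this
        linarith
      linarith
    have hF1le1 : F1 (-‖x‖) ≤ 1 := by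
      by_cases hx1 : 1 ≤ ‖x‖
      · rw [F1zero _ (by linarith)]; norm_num
      · push_neg at hx1
        have hn0 : (0:ℝ) ≤ ‖x‖ := norm_nonneg x
        rw [hF1val _ (by linarith) (by linarith)]
        calc K * I (-‖x‖) ≤ K * I 1 :=
              mul_le_mul_of_nonneg_left (Imono _ _ (by linarith) (by linarith) le_rfl) hK0
          _ = 1 := hKI1
    rcases le_or_gt s₀ (-1) with hc1 | hc1
    · have hx1 : 1 ≤ ‖x‖ := by linarith
      rw [F1zero _ (by linarith), ENNReal.ofReal_zero]
      exact zero_le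
    rcases le_or_gt 1 s₀ with hc2 | hc2
    · rw [Phigh w hw s₀ hc2]
      exact ENNReal.ofReal_le_one.mpr hF1le1
    · rw [Pval2 w hw s₀ hc1.le hc2.le]
      apply ENNReal.ofReal_le_ofReal
      by_cases hx1 : 1 ≤ ‖x‖
      · rw [F1zero _ (by linarith)]
        exact mul_nonneg hK0 (Inn s₀ hc1.le hc2.le)
      · push_neg at hx1
        have hn0 : (0:ℝ) ≤ ‖x‖ := norm_nonneg x
        rw [hF1val _ (by linarith) (by linarith)]
        exact mul_le_mul_of_nonneg_left (Imono _ _ (by linarith) hs₀ hc2.le) hK0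
end

section
/- Let P be the uniform distribution on the unit square [0,1]² in ℝ². Then the halfspace depth satisfies HD((x,y);P) = 2·min{x,1−x}·min{y,1−y} for (x,y) ∈ [0,1]², and HD((x,y);P) = 0 otherwise. -/
open MeasureTheory Set
open scoped ENNReal RealInnerProductSpace

namespace HSDepth

noncomputable def e2 : EuclideanSpace ℝ (Fin 2) ≃ᵐ ℝ × ℝ :=
  (MeasurableEquiv.toLp 2 (Fin 2 → ℝ)).symm.trans (MeasurableEquiv.finTwoArrow)

lemma mp_e2 : MeasurePreserving e2 volume volume :=
  (volume_preserving_finTwoArrow ℝ).comp (EuclideanSpace.volume_preserving_symm_measurableEquiv_toLp (Fin 2))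

lemma e2_apply (w : EuclideanSpace ℝ (Fin 2)) : e2 w = (w 0, w 1) := rfl

noncomputable def uvec (c d : ℝ) : EuclideanSpace ℝ (Fin 2) :=
  (WithLp.equiv 2 (Fin 2 → ℝ)).symm ![c, d]

lemma uvec_0 (c d : ℝ) : uvec c d 0 = c := rfl
lemma uvec_1 (c d : ℝ) : uvec c d 1 = d := rfl

lemma inner_two (z u : EuclideanSpace ℝ (Fin 2)) : ⟪z, u⟫ = z 0 * u 0 + z 1 * u 1 := by
  simp [PiLp.inner_apply, Fin.sum_univ_two]; ring

lemma inner_uvec (z : EuclideanSpace ℝ (Fin 2)) (c d : ℝ) :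
    ⟪z, uvec c d⟫ = z 0 * c + z 1 * d := by
  rw [inner_two, uvec_0, uvec_1]

lemma uvec_ne_zero (c d : ℝ) (h : c ≠ 0 ∨ d ≠ 0) : uvec c d ≠ 0 := by
  intro h0
  have h1 : uvec c d 0 = 0 := by rw [h0]; rfl
  have h2 : uvec c d 1 = 0 := by rw [h0]; rfl
  rw [uvec_0] at h1; rw [uvec_1] at h2
  rcases h with h | h <;> [exact h h1; exact h h2]

lemma hsp_meas (u : EuclideanSpace ℝ (Fin 2)) (α : ℝ) : MeasurableSet (hsp 2 u α) :=
  (isClosed_le (continuous_id.inner continuous_const) continuous_const).measurableSet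

/-- the unit square. -/
def Sq : Set (EuclideanSpace ℝ (Fin 2)) :=
  {z : EuclideanSpace ℝ (Fin 2) | z 0 ∈ Set.Icc (0:ℝ) 1 ∧ z 1 ∈ Set.Icc (0:ℝ) 1}

lemma HD_le_vol (P : Measure (EuclideanSpace ℝ (Fin 2)))
    (hP : P = volume.restrict Sq) (z : EuclideanSpace ℝ (Fin 2))
    (u : EuclideanSpace ℝ (Fin 2)) (α : ℝ) (hu : u ≠ 0) (hz : ⟪z, u⟫ ≤ α) :
    HD P z ≤ volume (hsp 2 u α ∩ Sq) := by
  rw [hP]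
  have h : HD (volume.restrict Sq) z ≤ (volume.restrict Sq) (hsp 2 u α) := by
    unfold HD
    exact iInf_le_of_le u (iInf_le_of_le hu (iInf_le_of_le α (iInf_le_of_le hz le_rfl)))
  rwa [Measure.restrict_apply (hsp_meas u α)] at h

section area

lemma meas_tri (f g : ℝ → ℝ) (hf : Continuous f) (hg : Continuous g) (c : ℝ) :
    MeasurableSet {w : ℝ × ℝ | (w.1 ∈ Icc (0:ℝ) 1 ∧ w.2 ∈ Icc (0:ℝ) 1) ∧ f w.1 + g w.2 ≤ c} := by
  have : {w : ℝ × ℝ | (w.1 ∈ Icc (0:ℝ) 1 ∧ w.2 ∈ Icc (0:ℝ) 1) ∧ f w.1 + g w.2 ≤ c}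
      = (Icc (0:ℝ) 1 ×ˢ Icc (0:ℝ) 1) ∩ {w : ℝ × ℝ | f w.1 + g w.2 ≤ c} := by
    ext w; simp only [Set.mem_inter_iff, Set.mem_prod, Set.mem_setOf_eq] <;> tauto
  rw [this]
  exact (measurableSet_Icc.prod measurableSet_Icc).inter
    ((isClosed_le ((hf.comp continuous_fst).add (hg.comp continuous_snd))
      continuous_const).measurableSet)

lemma area_tri (p q : ℝ) (hp : 0 < p) (hq : 0 < q) (hp2 : 2*p ≤ 1) (hq2 : 2*q ≤ 1) :
    volume {w : ℝ × ℝ | (w.1 ∈ Icc (0:ℝ) 1 ∧ w.2 ∈ Icc (0:ℝ) 1) ∧ q*w.1 + p*w.2 ≤ 2*(p*q)}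
      = ENNReal.ofReal (2*(p*q)) := by
  set A : Set (ℝ × ℝ) :=
    {w : ℝ × ℝ | (w.1 ∈ Icc (0:ℝ) 1 ∧ w.2 ∈ Icc (0:ℝ) 1) ∧ q*w.1 + p*w.2 ≤ 2*(p*q)} with hAdef
  have hA : MeasurableSet A := meas_tri _ _ (by continuity) (by continuity) _
  have hslice : ∀ s : ℝ, (volume : Measure ℝ) (Prod.mk s ⁻¹' A)
      = Set.indicator (Icc (0:ℝ) 1) (fun s => ENNReal.ofReal ((2*(p*q) - q*s)/p)) s := by
    intro s
    by_cases hs : s ∈ Icc (0:ℝ) 1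
    · rw [Set.indicator_of_mem hs]
      have hset : Prod.mk s ⁻¹' A = Icc (0:ℝ) ((2*(p*q) - q*s)/p) := by
        ext t
        simp only [hAdef, Set.mem_preimage, Set.mem_setOf_eq, Set.mem_Icc]
        constructor
        · rintro ⟨⟨_, ht⟩, hle⟩
          refine ⟨ht.1, ?_⟩
          rw [le_div_iff₀ hp]; linarith
        · rintro ⟨ht0, ht1⟩
          rw [le_div_iff₀ hp] at ht1
          have hs0 := hs.1
          refine ⟨⟨hs, ht0, ?_⟩, by linarith⟩
          nlinarith
      rw [hset, Real.volume_Icc, sub_zero]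
    · rw [Set.indicator_of_notMem hs]
      have hset : Prod.mk s ⁻¹' A = ∅ := by
        ext t; simp only [hAdef, Set.mem_preimage, Set.mem_setOf_eq, Set.mem_empty_iff_false,
          iff_false]
        rintro ⟨⟨hs', _⟩, _⟩; exact hs hs'
      rw [hset, measure_empty]
  rw [Measure.volume_eq_prod, Measure.prod_apply hA]
  rw [lintegral_congr hslice, lintegral_indicator measurableSet_Icc]
  set g : ℝ → ℝ := fun s => max ((2*(p*q) - q*s)/p) 0 with hgdef
  have hgcont : Continuous g := by
    apply Continuous.max _ continuous_const
    continuity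
  have h1 : ∫⁻ s in Icc (0:ℝ) 1, ENNReal.ofReal ((2*(p*q) - q*s)/p)
      = ∫⁻ s in Icc (0:ℝ) 1, ENNReal.ofReal (g s) := by
    refine lintegral_congr fun s => ?_
    rcases le_total ((2*(p*q) - q*s)/p) 0 with h | h
    · rw [ENNReal.ofReal_eq_zero.2 h, hgdef]; simp [max_eq_right h]
    · rw [hgdef]; simp [max_eq_left h]
  rw [h1, ← MeasureTheory.ofReal_integral_eq_lintegral_ofReal
    (hgcont.integrableOn_Icc) (Filter.Eventually.of_forall fun s => le_max_right _ _)]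
  congr 1
  have hint : ∫ s in Icc (0:ℝ) 1, g s = ∫ s in (0:ℝ)..1, g s := by
    rw [intervalIntegral.integral_of_le (by norm_num), MeasureTheory.integral_Icc_eq_integral_Ioc]
  rw [hint]
  have hsplit : (∫ s in (0:ℝ)..(2*p), g s) + ∫ s in (2*p)..1, g s = ∫ s in (0:ℝ)..1, g s := by
    exact intervalIntegral.integral_add_adjacent_intervals
      (hgcont.intervalIntegrable (μ := volume) _ _) (hgcont.intervalIntegrable (μ := volume) _ _)
  rw [← hsplit]
  have hright : ∫ s in (2*p)..1, g s = 0 := by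
    rw [intervalIntegral.integral_congr (g := fun _ => (0:ℝ)) ?_, intervalIntegral.integral_zero]
    intro s hs
    rw [Set.uIcc_of_le hp2] at hs
    have : (2*(p*q) - q*s)/p ≤ 0 := by
      apply div_nonpos_of_nonpos_of_nonneg _ hp.le
      nlinarith [hs.1]
    simp [hgdef, max_eq_right this]
  have hleft : ∫ s in (0:ℝ)..(2*p), g s = 2*(p*q) := by
    have : ∫ s in (0:ℝ)..(2*p), g s = ∫ s in (0:ℝ)..(2*p), (2*q - (q/p)*s) := by
      refine intervalIntegral.integral_congr fun s hs => ?_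
      rw [Set.uIcc_of_le (by positivity)] at hs
      have hnn : 0 ≤ (2*(p*q) - q*s)/p := by
        apply div_nonneg _ hp.le
        nlinarith [hs.2]
      rw [hgdef]
      simp only [max_eq_left hnn]
      field_simp
    rw [this, intervalIntegral.integral_sub intervalIntegrable_const
      ((by fun_prop : Continuous (fun s : ℝ => q/p*s)).intervalIntegrable (μ := volume) _ _),
      intervalIntegral.integral_const, intervalIntegral.integral_const_mul, integral_id]
    field_simp
    ring
  rw [hright, hleft, add_zero]

/-- reflection coordinate -/
def dd (σ : Bool) (s : ℝ) : ℝ := if σ then s else 1 - s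

lemma dd_cont (σ : Bool) : Continuous (dd σ) := by
  cases σ
  · exact continuous_const.sub continuous_id'
  · exact continuous_id'

lemma dd_mp (σ : Bool) : MeasurePreserving (dd σ) (volume : Measure ℝ) volume := by
  cases σ
  · exact Measure.measurePreserving_sub_left (volume : Measure ℝ) 1
  · exact MeasurePreserving.id (volume : Measure ℝ)

lemma dd_mem (σ : Bool) (s : ℝ) : dd σ s ∈ Icc (0:ℝ) 1 ↔ s ∈ Icc (0:ℝ) 1 := by
  cases σ <;> simp only [dd, Bool.false_eq_true, if_false, if_true, Set.mem_Icc] <;>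
    constructor <;> rintro ⟨h1, h2⟩ <;> constructor <;> linarith

lemma area_tri' (p q : ℝ) (hp : 0 < p) (hq : 0 < q) (hp2 : 2*p ≤ 1) (hq2 : 2*q ≤ 1)
    (σ τ : Bool) :
    volume {w : ℝ × ℝ | (w.1 ∈ Icc (0:ℝ) 1 ∧ w.2 ∈ Icc (0:ℝ) 1) ∧
        q * dd σ w.1 + p * dd τ w.2 ≤ 2*(p*q)}
      = ENNReal.ofReal (2*(p*q)) := by
  have hmp : MeasurePreserving (fun w : ℝ × ℝ => (dd σ w.1, dd τ w.2)) volume volume := by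
    rw [Measure.volume_eq_prod]
    exact (dd_mp σ).prod (dd_mp τ)
  have hset : {w : ℝ × ℝ | (w.1 ∈ Icc (0:ℝ) 1 ∧ w.2 ∈ Icc (0:ℝ) 1) ∧
        q * dd σ w.1 + p * dd τ w.2 ≤ 2*(p*q)}
      = (fun w : ℝ × ℝ => (dd σ w.1, dd τ w.2)) ⁻¹'
        {w : ℝ × ℝ | (w.1 ∈ Icc (0:ℝ) 1 ∧ w.2 ∈ Icc (0:ℝ) 1) ∧ q*w.1 + p*w.2 ≤ 2*(p*q)} := by
    ext w
    simp only [Set.mem_preimage, Set.mem_setOf_eq, dd_mem]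
  rw [hset, hmp.measure_preimage
    (meas_tri (fun s => q*s) (fun s => p*s) (by continuity) (by continuity) _).nullMeasurableSet]
  exact area_tri p q hp hq hp2 hq2

lemma meas_tri' (p q : ℝ) (σ τ : Bool) :
    MeasurableSet {w : ℝ × ℝ | (w.1 ∈ Icc (0:ℝ) 1 ∧ w.2 ∈ Icc (0:ℝ) 1) ∧
        q * dd σ w.1 + p * dd τ w.2 ≤ 2*(p*q)} :=
  meas_tri (fun s => q * dd σ s) (fun s => p * dd τ s)
    (continuous_const.mul (dd_cont σ)) (continuous_const.mul (dd_cont τ)) _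

end area

lemma upper_bound (P : Measure (EuclideanSpace ℝ (Fin 2))) (hP : P = volume.restrict Sq)
    (z : EuclideanSpace ℝ (Fin 2)) (p q : ℝ) (σ τ : Bool)
    (hp : 0 < p) (hq : 0 < q) (hp2 : 2*p ≤ 1) (hq2 : 2*q ≤ 1)
    (hz : q * dd σ (z 0) + p * dd τ (z 1) ≤ 2*(p*q)) :
    HD P z ≤ ENNReal.ofReal (2*(p*q)) := by
  set c : ℝ := if σ then q else -q with hc
  set d : ℝ := if τ then p else -p with hd
  set α : ℝ := 2*(p*q) - (if σ then 0 else q) - (if τ then 0 else p) with hα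
  have hune : uvec c d ≠ 0 := by
    apply uvec_ne_zero
    left
    cases σ <;> simp [hc] <;> linarith
  have hiz : ⟪z, uvec c d⟫ ≤ α := by
    rw [inner_uvec]
    cases σ <;> cases τ <;>
      simp only [dd, hc, hd, hα, Bool.false_eq_true, if_false, if_true] at hz ⊢ <;> nlinarith
  refine le_trans (HD_le_vol P hP z (uvec c d) α hune hiz) ?_
  have hset : hsp 2 (uvec c d) α ∩ Sq = e2 ⁻¹' {w : ℝ × ℝ |
      (w.1 ∈ Icc (0:ℝ) 1 ∧ w.2 ∈ Icc (0:ℝ) 1) ∧ q * dd σ w.1 + p * dd τ w.2 ≤ 2*(p*q)} := by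
    ext w
    simp only [hsp, Sq, Set.mem_inter_iff, Set.mem_setOf_eq, Set.mem_preimage, e2_apply,
      inner_uvec]
    cases σ <;> cases τ <;>
      simp only [dd, hc, hd, hα, Bool.false_eq_true, if_false, if_true] <;>
      constructor <;> rintro ⟨h1, h2⟩ <;> refine ⟨?_, ?_⟩ <;> first | assumption | nlinarith
  rw [hset, mp_e2.measure_preimage (meas_tri' p q σ τ).nullMeasurableSet,
    area_tri' p q hp hq hp2 hq2 σ τ]

lemma lower_bound (z : EuclideanSpace ℝ (Fin 2))
    (hx : z 0 ∈ Set.Icc (0:ℝ) 1) (hy : z 1 ∈ Set.Icc (0:ℝ) 1)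
    (u : EuclideanSpace ℝ (Fin 2)) (α : ℝ) (hz : ⟪z, u⟫ ≤ α) :
    ENNReal.ofReal (2 * min (z 0) (1 - z 0) * min (z 1) (1 - z 1))
      ≤ volume (hsp 2 u α ∩ Sq) := by
  set x := z 0
  set y := z 1
  set a := min x (1-x) with hadef
  set b := min y (1-y) with hbdef
  have hax : a ≤ x := min_le_left _ _
  have hax' : a ≤ 1 - x := min_le_right _ _
  have hby : b ≤ y := min_le_left _ _
  have hby' : b ≤ 1 - y := min_le_right _ _
  have ha0 : 0 ≤ a := le_min hx.1 (by linarith [hx.2])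
  have hb0 : 0 ≤ b := le_min hy.1 (by linarith [hy.2])
  set R : Set (EuclideanSpace ℝ (Fin 2)) :=
    e2 ⁻¹' (Icc (x-a) (x+a) ×ˢ Icc (y-b) (y+b)) with hRdef
  have hRmeas : MeasurableSet R := e2.measurable (measurableSet_Icc.prod measurableSet_Icc)
  have hvolR : volume R = 2 * ENNReal.ofReal (2 * a * b) := by
    rw [hRdef, mp_e2.measure_preimage (measurableSet_Icc.prod measurableSet_Icc).nullMeasurableSet,
      Measure.volume_eq_prod, Measure.prod_prod, Real.volume_Icc, Real.volume_Icc,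
      show x + a - (x - a) = 2*a by ring, show y + b - (y - b) = 2*b by ring,
      ← ENNReal.ofReal_mul (by positivity),
      show (2*a) * (2*b) = 2 * (2 * a * b) by ring,
      ENNReal.ofReal_mul (by norm_num), ENNReal.ofReal_ofNat]
  have hRS : R ⊆ Sq := by
    rintro w hw
    rw [hRdef, Set.mem_preimage, e2_apply, Set.prodMk_mem_set_prod_eq, Set.mem_Icc] at hw
    exact ⟨⟨by linarith [hw.1.1], by linarith [hw.1.2]⟩, ⟨by linarith [hw.2.1], by linarith [hw.2.2]⟩⟩
  set σm : EuclideanSpace ℝ (Fin 2) → EuclideanSpace ℝ (Fin 2) := fun w => (z + z) - w with hσm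
  have hσ : MeasurePreserving σm volume volume := Measure.measurePreserving_sub_left volume (z+z)
  set H := hsp 2 u α with hH
  have key : R \ H ⊆ σm ⁻¹' (R ∩ H) := by
    rintro w ⟨hwR, hwH⟩
    rw [hRdef, Set.mem_preimage, e2_apply, Set.prodMk_mem_set_prod_eq, Set.mem_Icc] at hwR
    have hwH' : ¬ (⟪w, u⟫ ≤ α) := hwH
    constructor
    · rw [hRdef, Set.mem_preimage, e2_apply, Set.prodMk_mem_set_prod_eq, Set.mem_Icc]
      have e0 : σm w 0 = x + x - w 0 := rfl
      have e1 : σm w 1 = y + y - w 1 := rfl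
      rw [e0, e1]
      refine ⟨⟨by linarith [hwR.1.2], by linarith [hwR.1.1]⟩,
        ⟨by linarith [hwR.2.2], by linarith [hwR.2.1]⟩⟩
    · show ⟪(z + z) - w, u⟫ ≤ α
      rw [inner_sub_left, inner_add_left]
      push_neg at hwH'
      linarith
  have hsum : volume (R ∩ H) + volume (R \ H) = volume R :=
    measure_inter_add_diff R (hsp_meas u α)
  have hdiff : volume (R \ H) ≤ volume (R ∩ H) := by
    calc volume (R \ H) ≤ volume (σm ⁻¹' (R ∩ H)) := measure_mono key
      _ = volume (R ∩ H) :=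
        hσ.measure_preimage ((hRmeas.inter (hsp_meas u α)).nullMeasurableSet)
  have h2v : 2 * ENNReal.ofReal (2 * a * b) ≤ 2 * volume (R ∩ H) := by
    rw [← hvolR, ← hsum, two_mul]
    exact add_le_add le_rfl hdiff
  have hv : ENNReal.ofReal (2 * a * b) ≤ volume (R ∩ H) :=
    (ENNReal.mul_le_mul_iff_right two_ne_zero ENNReal.ofNat_ne_top).mp h2v
  refine le_trans hv (measure_mono ?_)
  rintro w ⟨h1, h2⟩
  exact ⟨h2, hRS h1⟩

lemma seg_zero (A : Set (ℝ × ℝ)) (hA : MeasurableSet A)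
    (h : volume A = 0) : volume (e2 ⁻¹' A) = 0 := by
  rw [mp_e2.measure_preimage hA.nullMeasurableSet]; exact h

end HSDepth

open HSDepth

/-- The halfspace depth of the uniform distribution on the unit square `[0,1]²`. -/
theorem halfspace_depth_unit_square
    (P : Measure (EuclideanSpace ℝ (Fin 2)))
    (hP : P = volume.restrict
      {z : EuclideanSpace ℝ (Fin 2) | z 0 ∈ Set.Icc (0:ℝ) 1 ∧ z 1 ∈ Set.Icc (0:ℝ) 1}) :
    (∀ z : EuclideanSpace ℝ (Fin 2), z 0 ∈ Set.Icc (0:ℝ) 1 → z 1 ∈ Set.Icc (0:ℝ) 1 →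
      HD P z = ENNReal.ofReal
        (2 * min (z 0) (1 - z 0) * min (z 1) (1 - z 1))) ∧
    (∀ z : EuclideanSpace ℝ (Fin 2),
      ¬(z 0 ∈ Set.Icc (0:ℝ) 1 ∧ z 1 ∈ Set.Icc (0:ℝ) 1) → HD P z = 0) := by
  have hP' : P = volume.restrict Sq := hP
  constructor
  · intro z hx hy
    set x := z 0
    set y := z 1
    set a := min x (1-x) with hadef
    set b := min y (1-y) with hbdef
    have hax : a ≤ x := min_le_left _ _
    have hax' : a ≤ 1 - x := min_le_right _ _
    have hby : b ≤ y := min_le_left _ _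
    have hby' : b ≤ 1 - y := min_le_right _ _
    have ha0 : 0 ≤ a := le_min hx.1 (by linarith [hx.2])
    have hb0 : 0 ≤ b := le_min hy.1 (by linarith [hy.2])
    have ha2 : 2*a ≤ 1 := by
      rcases le_total x (1/2) with h | h
      · linarith [min_le_left x (1-x)]
      · linarith [min_le_right x (1-x)]
    have hb2 : 2*b ≤ 1 := by
      rcases le_total y (1/2) with h | h
      · linarith [min_le_left y (1-y)]
      · linarith [min_le_right y (1-y)]
    -- lower bound
    have hlow : ENNReal.ofReal (2 * a * b) ≤ HD P z := by
      unfold HD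
      refine le_iInf fun u => le_iInf fun hu => le_iInf fun α => le_iInf fun hα => ?_
      rw [hP', Measure.restrict_apply (hsp_meas u α)]
      exact lower_bound z hx hy u α hα
    rcases eq_or_lt_of_le ha0 with ha0' | ha0'
    · -- a = 0 : point on vertical boundary
      have hrhs : ENNReal.ofReal (2 * a * b) = 0 := by
        rw [← ha0']; simp
      refine le_antisymm ?_ (hrhs ▸ hlow)
      rw [hrhs]
      rcases min_cases x (1-x) with ⟨h1, _⟩ | ⟨h1, _⟩
      · -- x = 0
        have hx0 : x = 0 := by linarith [hadef.trans h1]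
        refine le_trans (HD_le_vol P hP' z (uvec 1 0) 0
          (uvec_ne_zero 1 0 (Or.inl one_ne_zero))
          (by rw [inner_uvec]; linarith [hx0])) ?_
        have hsub : hsp 2 (uvec 1 0) 0 ∩ Sq ⊆ e2 ⁻¹' ({(0:ℝ)} ×ˢ (Set.univ : Set ℝ)) := by
          rintro w ⟨h1w, h2w⟩
          have : ⟪w, uvec 1 0⟫ ≤ 0 := h1w
          rw [inner_uvec] at this
          simp only [Set.mem_preimage, e2_apply, Set.mem_prod, Set.mem_singleton_iff,
            Set.mem_univ, and_true]
          have := h2w.1.1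
          linarith [h2w.1.1]
        refine le_trans (measure_mono hsub) (le_of_eq (seg_zero _ 
          ((measurableSet_singleton _).prod MeasurableSet.univ) ?_))
        rw [Measure.volume_eq_prod, Measure.prod_prod, Real.volume_singleton, zero_mul]
      · -- x = 1
        have hx1 : x = 1 := by linarith [hadef.trans h1]
        refine le_trans (HD_le_vol P hP' z (uvec (-1) 0) (-1)
          (uvec_ne_zero (-1) 0 (Or.inl (by norm_num)))
          (by rw [inner_uvec]; linarith [hx1])) ?_
        have hsub : hsp 2 (uvec (-1) 0) (-1) ∩ Sq ⊆ e2 ⁻¹' ({(1:ℝ)} ×ˢ (Set.univ : Set ℝ)) := by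
          rintro w ⟨h1w, h2w⟩
          have : ⟪w, uvec (-1) 0⟫ ≤ -1 := h1w
          rw [inner_uvec] at this
          simp only [Set.mem_preimage, e2_apply, Set.mem_prod, Set.mem_singleton_iff,
            Set.mem_univ, and_true]
          linarith [h2w.1.2]
        refine le_trans (measure_mono hsub) (le_of_eq (seg_zero _
          ((measurableSet_singleton _).prod MeasurableSet.univ) ?_))
        rw [Measure.volume_eq_prod, Measure.prod_prod, Real.volume_singleton, zero_mul]
    rcases eq_or_lt_of_le hb0 with hb0' | hb0'
    · have hrhs : ENNReal.ofReal (2 * a * b) = 0 := by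
        rw [← hb0']; simp
      refine le_antisymm ?_ (hrhs ▸ hlow)
      rw [hrhs]
      rcases min_cases y (1-y) with ⟨h1, _⟩ | ⟨h1, _⟩
      · have hy0 : y = 0 := by linarith [hbdef.trans h1]
        refine le_trans (HD_le_vol P hP' z (uvec 0 1) 0
          (uvec_ne_zero 0 1 (Or.inr one_ne_zero))
          (by rw [inner_uvec]; linarith [hy0])) ?_
        have hsub : hsp 2 (uvec 0 1) 0 ∩ Sq ⊆ e2 ⁻¹' ((Set.univ : Set ℝ) ×ˢ {(0:ℝ)}) := by
          rintro w ⟨h1w, h2w⟩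
          have : ⟪w, uvec 0 1⟫ ≤ 0 := h1w
          rw [inner_uvec] at this
          simp only [Set.mem_preimage, e2_apply, Set.mem_prod, Set.mem_singleton_iff,
            Set.mem_univ, true_and]
          linarith [h2w.2.1]
        refine le_trans (measure_mono hsub) (le_of_eq (seg_zero _
          (MeasurableSet.univ.prod (measurableSet_singleton _)) ?_))
        rw [Measure.volume_eq_prod, Measure.prod_prod, Real.volume_singleton, mul_zero]
      · have hy1 : y = 1 := by linarith [hbdef.trans h1]
        refine le_trans (HD_le_vol P hP' z (uvec 0 (-1)) (-1)
          (uvec_ne_zero 0 (-1) (Or.inr (by norm_num)))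
          (by rw [inner_uvec]; linarith [hy1])) ?_
        have hsub : hsp 2 (uvec 0 (-1)) (-1) ∩ Sq ⊆ e2 ⁻¹' ((Set.univ : Set ℝ) ×ˢ {(1:ℝ)}) := by
          rintro w ⟨h1w, h2w⟩
          have : ⟪w, uvec 0 (-1)⟫ ≤ -1 := h1w
          rw [inner_uvec] at this
          simp only [Set.mem_preimage, e2_apply, Set.mem_prod, Set.mem_singleton_iff,
            Set.mem_univ, true_and]
          linarith [h2w.2.2]
        refine le_trans (measure_mono hsub) (le_of_eq (seg_zero _
          (MeasurableSet.univ.prod (measurableSet_singleton _)) ?_))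
        rw [Measure.volume_eq_prod, Measure.prod_prod, Real.volume_singleton, mul_zero]
    · -- interior-ish case : a > 0, b > 0
      refine le_antisymm ?_ hlow
      have heq : (2 : ℝ) * a * b = 2 * (a * b) := by ring
      rw [heq]
      -- choose σ τ according to which side realizes the min
      rcases le_total x (1/2) with hxs | hxs
      · have hax2 : a = x := min_eq_left (by linarith)
        rcases le_total y (1/2) with hys | hys
        · have hby2 : b = y := min_eq_left (by linarith)
          exact upper_bound P hP' z a b true true ha0' hb0' ha2 hb2
            (le_of_eq (by show b * z 0 + a * z 1 = 2*(a*b)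
                          rw [show a = z 0 from hax2, show b = z 1 from hby2]; ring))
        · have hby2 : b = 1 - y := min_eq_right (by linarith)
          exact upper_bound P hP' z a b true false ha0' hb0' ha2 hb2
            (le_of_eq (by show b * z 0 + a * (1 - z 1) = 2*(a*b)
                          rw [show a = z 0 from hax2, show b = 1 - z 1 from hby2]; ring))
      · have hax2 : a = 1 - x := min_eq_right (by linarith)
        rcases le_total y (1/2) with hys | hys
        · have hby2 : b = y := min_eq_left (by linarith)
          exact upper_bound P hP' z a b false true ha0' hb0' ha2 hb2
            (le_of_eq (by show b * (1 - z 0) + a * z 1 = 2*(a*b)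
                          rw [show a = 1 - z 0 from hax2, show b = z 1 from hby2]; ring))
        · have hby2 : b = 1 - y := min_eq_right (by linarith)
          exact upper_bound P hP' z a b false false ha0' hb0' ha2 hb2
            (le_of_eq (by show b * (1 - z 0) + a * (1 - z 1) = 2*(a*b)
                          rw [show a = 1 - z 0 from hax2, show b = 1 - z 1 from hby2]; ring))
  · intro z hz
    rw [not_and_or] at hz
    have main : ∃ u ≠ (0 : EuclideanSpace ℝ (Fin 2)), ∃ α : ℝ, ⟪z, u⟫ ≤ α ∧
        hsp 2 u α ∩ Sq = ∅ := by
      rcases hz with hz | hz <;> rw [Set.mem_Icc, not_and_or, not_le, not_le] at hz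
      · rcases hz with hz | hz
        · refine ⟨uvec 1 0, uvec_ne_zero 1 0 (Or.inl one_ne_zero), z 0,
            by rw [inner_uvec]; simp, ?_⟩
          ext w
          simp only [Set.mem_inter_iff, Set.mem_empty_iff_false, iff_false, not_and]
          intro h1w h2w
          have : ⟪w, uvec 1 0⟫ ≤ z 0 := h1w
          rw [inner_uvec] at this
          have := h2w.1.1
          linarith
        · refine ⟨uvec (-1) 0, uvec_ne_zero (-1) 0 (Or.inl (by norm_num)), -(z 0),
            by rw [inner_uvec]; simp, ?_⟩
          ext w
          simp only [Set.mem_inter_iff, Set.mem_empty_iff_false, iff_false, not_and]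
          intro h1w h2w
          have : ⟪w, uvec (-1) 0⟫ ≤ -(z 0) := h1w
          rw [inner_uvec] at this
          have := h2w.1.2
          linarith
      · rcases hz with hz | hz
        · refine ⟨uvec 0 1, uvec_ne_zero 0 1 (Or.inr one_ne_zero), z 1,
            by rw [inner_uvec]; simp, ?_⟩
          ext w
          simp only [Set.mem_inter_iff, Set.mem_empty_iff_false, iff_false, not_and]
          intro h1w h2w
          have : ⟪w, uvec 0 1⟫ ≤ z 1 := h1w
          rw [inner_uvec] at this
          have := h2w.2.1
          linarith
        · refine ⟨uvec 0 (-1), uvec_ne_zero 0 (-1) (Or.inr (by norm_num)), -(z 1),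
            by rw [inner_uvec]; simp, ?_⟩
          ext w
          simp only [Set.mem_inter_iff, Set.mem_empty_iff_false, iff_false, not_and]
          intro h1w h2w
          have : ⟪w, uvec 0 (-1)⟫ ≤ -(z 1) := h1w
          rw [inner_uvec] at this
          have := h2w.2.2
          linarith
    rcases main with ⟨u, hu, α, hzu, hempty⟩
    refine le_antisymm ?_ (by simp)
    refine le_trans (HD_le_vol P hP' z u α hu hzu) ?_
    rw [hempty, measure_empty]
end

section
/- Let P be the uniform distribution on the closed unit disc in ℝ². Then HD(x;P) = 1/2 − (1/π)(arcsin(‖x‖) + ‖x‖√(1−‖x‖²)) for ‖x‖ ≤ 1, and HD(x;P) = 0 for ‖x‖ > 1. -/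
open MeasureTheory
open scoped ENNReal RealInnerProductSpace

section Aux

open Real Set

noncomputable def Fcap (x : ℝ) : ℝ := Real.arcsin x + x * Real.sqrt (1 - x ^ 2)


lemma Fcap_hasDerivAt {x : ℝ} (hx : x ∈ Ioo (-1:ℝ) 1) :
    HasDerivAt Fcap (2 * Real.sqrt (1 - x ^ 2)) x := by
  have h1 : x ≠ -1 := ne_of_gt hx.1
  have h2 : x ≠ 1 := ne_of_lt hx.2
  have hpos : 0 < 1 - x ^ 2 := by nlinarith [hx.1, hx.2]
  have hs : 0 < Real.sqrt (1 - x ^ 2) := Real.sqrt_pos.2 hpos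
  have ha : HasDerivAt Real.arcsin (1 / Real.sqrt (1 - x ^ 2)) x :=
    Real.hasDerivAt_arcsin h1 h2
  have hq : HasDerivAt (fun y : ℝ => 1 - y ^ 2) (-(2 * x)) x := by
    simpa using ((hasDerivAt_pow 2 x).const_sub 1)
  have hsq : HasDerivAt (fun y : ℝ => Real.sqrt (1 - y ^ 2))
      (-(2 * x) / (2 * Real.sqrt (1 - x ^ 2))) x := hq.sqrt (ne_of_gt hpos)
  have hb : HasDerivAt (fun y : ℝ => y * Real.sqrt (1 - y ^ 2))
      (1 * Real.sqrt (1 - x ^ 2) + x * (-(2 * x) / (2 * Real.sqrt (1 - x ^ 2)))) x :=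
    (hasDerivAt_id x).mul hsq
  have := ha.add hb
  refine (show HasDerivAt Fcap _ x from this).congr_deriv ?_
  have hss : Real.sqrt (1 - x ^ 2) * Real.sqrt (1 - x ^ 2) = 1 - x ^ 2 :=
    Real.mul_self_sqrt hpos.le
  field_simp
  nlinarith [hss]

lemma Fcap_continuous : Continuous Fcap := by
  unfold Fcap
  exact Real.continuous_arcsin.add (continuous_id.mul ((continuous_const.sub (continuous_pow 2)).sqrt))

lemma integral_two_sqrt {a b : ℝ} (ha : -1 ≤ a) (hb : b ≤ 1) (hab : a ≤ b) :
    ∫ x in a..b, 2 * Real.sqrt (1 - x ^ 2) = Fcap b - Fcap a := by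
  refine intervalIntegral.integral_eq_sub_of_hasDerivAt_of_le hab
    (Fcap_continuous.continuousOn)
    (fun x hx => Fcap_hasDerivAt ⟨lt_of_le_of_lt ha hx.1, lt_of_lt_of_le hx.2 hb⟩) ?_
  exact (Continuous.intervalIntegrable (by continuity) a b)

lemma Fcap_mono {a b : ℝ} (ha : -1 ≤ a) (hb : b ≤ 1) (hab : a ≤ b) : Fcap a ≤ Fcap b := by
  have h := integral_two_sqrt ha hb hab
  have hnn : 0 ≤ ∫ x in a..b, 2 * Real.sqrt (1 - x ^ 2) :=
    intervalIntegral.integral_nonneg hab (fun x _ => by positivity)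
  linarith

lemma Fcap_neg (x : ℝ) : Fcap (-x) = -Fcap x := by
  simp [Fcap, Real.arcsin_neg]; ring

lemma Fcap_one : Fcap 1 = Real.pi / 2 := by simp [Fcap]
lemma Fcap_neg_one : Fcap (-1) = -(Real.pi / 2) := by
  rw [Fcap_neg, Fcap_one]


lemma capProd_volume {t : ℝ} (ht1 : -1 ≤ t) (ht2 : t ≤ 1) :
    volume {p : ℝ × ℝ | p.1 ≤ t ∧ p.1 ^ 2 + p.2 ^ 2 ≤ 1}
      = ENNReal.ofReal (Real.pi / 2 + Fcap t) := by
  have hA : MeasurableSet {p : ℝ × ℝ | p.1 ≤ t ∧ p.1 ^ 2 + p.2 ^ 2 ≤ 1} := by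
    apply MeasurableSet.inter
    · exact measurableSet_le measurable_fst measurable_const
    · exact measurableSet_le ((measurable_fst.pow_const 2).add (measurable_snd.pow_const 2))
        measurable_const
  rw [show (volume : Measure (ℝ × ℝ)) = (volume : Measure ℝ).prod volume from
    Measure.volume_eq_prod ℝ ℝ, Measure.prod_apply hA]
  have hslice : ∀ x : ℝ, volume (Prod.mk x ⁻¹' {p : ℝ × ℝ | p.1 ≤ t ∧ p.1 ^ 2 + p.2 ^ 2 ≤ 1})
      = Set.indicator (Iic t) (fun x => ENNReal.ofReal (2 * Real.sqrt (1 - x ^ 2))) x := by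
    intro x
    by_cases hx : x ≤ t
    · rw [Set.indicator_of_mem (mem_Iic.mpr hx)]
      by_cases hx2 : 1 - x ^ 2 < 0
      · have : Prod.mk x ⁻¹' {p : ℝ × ℝ | p.1 ≤ t ∧ p.1 ^ 2 + p.2 ^ 2 ≤ 1} = ∅ := by
          ext y; simp only [Set.mem_preimage, Set.mem_setOf_eq, Set.mem_empty_iff_false,
            iff_false, not_and]
          intro _; nlinarith [sq_nonneg y]
        rw [this, measure_empty, Real.sqrt_eq_zero'.mpr (by linarith)]
        simp
      · push_neg at hx2
        have : Prod.mk x ⁻¹' {p : ℝ × ℝ | p.1 ≤ t ∧ p.1 ^ 2 + p.2 ^ 2 ≤ 1}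
            = Icc (-Real.sqrt (1 - x ^ 2)) (Real.sqrt (1 - x ^ 2)) := by
          ext y
          simp only [Set.mem_preimage, Set.mem_setOf_eq, Set.mem_Icc, hx, true_and]
          rw [show x ^ 2 + y ^ 2 ≤ 1 ↔ y ^ 2 ≤ 1 - x ^ 2 by constructor <;> intro h <;> linarith]
          exact Real.sq_le hx2
        rw [this, Real.volume_Icc]
        congr 1
        have := Real.sqrt_nonneg (1 - x ^ 2)
        ring
    · rw [Set.indicator_of_notMem (fun h => hx (mem_Iic.mp h))]
      have : Prod.mk x ⁻¹' {p : ℝ × ℝ | p.1 ≤ t ∧ p.1 ^ 2 + p.2 ^ 2 ≤ 1} = ∅ := by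
        ext y; simp only [Set.mem_preimage, Set.mem_setOf_eq, Set.mem_empty_iff_false,
          iff_false, not_and]
        intro h; exact absurd h hx
      rw [this, measure_empty]
  simp only [hslice]
  rw [lintegral_indicator measurableSet_Iic]
  -- split Iic t into Iio (-1) ∪ Icc (-1) t
  have hsplit : Iic t = Iio (-1:ℝ) ∪ Icc (-1) t := by
    ext y; simp only [mem_Iic, mem_union, mem_Iio, mem_Icc]
    constructor
    · intro h; by_cases hy : y < -1
      · exact Or.inl hy
      · exact Or.inr ⟨le_of_not_gt hy, h⟩
    · rintro (h | ⟨_, h⟩)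
      · linarith
      · exact h
  rw [hsplit, lintegral_union measurableSet_Icc (by
    intro s hs1 hs2 y hy
    exact absurd (hs2 hy).1 (not_le.mpr (hs1 hy)))]
  have hzero : ∫⁻ x in Iio (-1:ℝ), ENNReal.ofReal (2 * Real.sqrt (1 - x ^ 2)) = 0 := by
    rw [setLIntegral_congr_fun measurableSet_Iio (fun x hx => ?_), lintegral_zero]
    have h1 : (1 : ℝ) - x ^ 2 < 0 := by
      have : x < -1 := hx
      nlinarith
    simp [Real.sqrt_eq_zero'.mpr (le_of_lt h1)]
  rw [hzero, zero_add]
  have hint : IntegrableOn (fun x : ℝ => 2 * Real.sqrt (1 - x ^ 2)) (Icc (-1) t) volume :=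
    (Continuous.integrableOn_Icc (continuous_const.mul ((continuous_const.sub (continuous_pow 2)).sqrt)))
  rw [← ofReal_integral_eq_lintegral_ofReal hint
    ((ae_restrict_iff' measurableSet_Icc).2 (ae_of_all _ fun x _ => by positivity))]
  congr 1
  rw [integral_Icc_eq_integral_Ioc, ← intervalIntegral.integral_of_le ht1,
    integral_two_sqrt (le_refl _) ht2 ht1]
  have : Fcap (-1) = -(Real.pi / 2) := Fcap_neg_one
  linarith

lemma mem_disc_iff (z : EuclideanSpace ℝ (Fin 2)) :
    z ∈ Metric.closedBall (0 : EuclideanSpace ℝ (Fin 2)) 1 ↔ z 0 ^ 2 + z 1 ^ 2 ≤ 1 := by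
  have hsq : ‖z‖ ^ 2 = z 0 ^ 2 + z 1 ^ 2 := by
    rw [EuclideanSpace.norm_eq, Real.sq_sqrt (by positivity)]
    simp [Fin.sum_univ_two, Real.norm_eq_abs, sq_abs]
  rw [mem_closedBall_zero_iff, ← hsq]
  constructor
  · intro h; nlinarith [norm_nonneg z]
  · intro h; nlinarith [norm_nonneg z]

lemma capE_volume {t : ℝ} (ht1 : -1 ≤ t) (ht2 : t ≤ 1) :
    volume ({z : EuclideanSpace ℝ (Fin 2) | z 0 ≤ t} ∩ Metric.closedBall 0 1)
      = ENNReal.ofReal (Real.pi / 2 + Fcap t) := by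
  have hmp := (volume_preserving_finTwoArrow ℝ).comp
    (EuclideanSpace.volume_preserving_symm_measurableEquiv_toLp (Fin 2))
  have hA : MeasurableSet {p : ℝ × ℝ | p.1 ≤ t ∧ p.1 ^ 2 + p.2 ^ 2 ≤ 1} := by
    apply MeasurableSet.inter
    · exact measurableSet_le measurable_fst measurable_const
    · exact measurableSet_le ((measurable_fst.pow_const 2).add (measurable_snd.pow_const 2))
        measurable_const
  have hset : {z : EuclideanSpace ℝ (Fin 2) | z 0 ≤ t} ∩ Metric.closedBall 0 1
      = (⇑(MeasurableEquiv.finTwoArrow) ∘ ⇑(MeasurableEquiv.toLp 2 (Fin 2 → ℝ)).symm) ⁻¹'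
        {p : ℝ × ℝ | p.1 ≤ t ∧ p.1 ^ 2 + p.2 ^ 2 ≤ 1} := by
    ext z
    simp only [Set.mem_inter_iff, Set.mem_setOf_eq, Set.mem_preimage, Function.comp_apply,
      mem_disc_iff]
    rfl
  rw [hset, hmp.measure_preimage hA.nullMeasurableSet, capProd_volume ht1 ht2]

lemma exists_onb {u : EuclideanSpace ℝ (Fin 2)} (hu : ‖u‖ = 1) :
    ∃ b : OrthonormalBasis (Fin 2) ℝ (EuclideanSpace ℝ (Fin 2)), b 0 = u := by
  have hcard : Module.finrank ℝ (EuclideanSpace ℝ (Fin 2)) = Fintype.card (Fin 2) := by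
    simp [finrank_euclideanSpace_fin]
  have horth : Orthonormal ℝ (({0} : Set (Fin 2)).restrict (fun _ : Fin 2 => u)) := by
    constructor
    · intro i; exact hu
    · intro i j hij
      exfalso
      rcases i with ⟨i, hi⟩; rcases j with ⟨j, hj⟩
      simp only [Set.mem_singleton_iff] at hi hj
      exact hij (by subst hi; subst hj; rfl)
  obtain ⟨b, hb⟩ := horth.exists_orthonormalBasis_extension_of_card_eq hcard
  exact ⟨b, hb 0 rfl⟩

lemma hsp_volume {u : EuclideanSpace ℝ (Fin 2)} (hu : ‖u‖ = 1) {t : ℝ}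
    (ht1 : -1 ≤ t) (ht2 : t ≤ 1) :
    volume (hsp 2 u t ∩ Metric.closedBall 0 1)
      = ENNReal.ofReal (Real.pi / 2 + Fcap t) := by
  obtain ⟨b, hb⟩ := exists_onb hu
  have hset : hsp 2 u t ∩ Metric.closedBall 0 1
      = ⇑b.repr ⁻¹' ({z : EuclideanSpace ℝ (Fin 2) | z 0 ≤ t} ∩ Metric.closedBall 0 1) := by
    ext z
    simp only [Set.mem_inter_iff, Set.mem_preimage, Set.mem_setOf_eq, hsp,
      mem_closedBall_zero_iff]
    rw [b.repr_apply_apply, hb, real_inner_comm, b.repr.norm_map]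
  have hm : MeasurableSet ({z : EuclideanSpace ℝ (Fin 2) | z 0 ≤ t} ∩ Metric.closedBall 0 1) :=
    ((measurableSet_le (by fun_prop) measurable_const)).inter measurableSet_closedBall
  rw [hset, b.measurePreserving_repr.measure_preimage hm.nullMeasurableSet,
    capE_volume ht1 ht2]


lemma hsp_measurableSet (u : EuclideanSpace ℝ (Fin 2)) (α : ℝ) :
    MeasurableSet (hsp 2 u α) :=
  (isClosed_le (Continuous.inner continuous_id continuous_const) continuous_const).measurableSet

lemma hsp_normalize {u : EuclideanSpace ℝ (Fin 2)} (hu : u ≠ 0) (α : ℝ) :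
    hsp 2 u α = hsp 2 (‖u‖⁻¹ • u) (‖u‖⁻¹ * α) := by
  have hc : (0:ℝ) < ‖u‖⁻¹ := inv_pos.2 (norm_pos_iff.2 hu)
  ext z
  simp only [hsp, Set.mem_setOf_eq, real_inner_smul_right]
  exact (mul_le_mul_iff_right₀ hc).symm

lemma P_hsp {P : Measure (EuclideanSpace ℝ (Fin 2))}
    (hP : P = (ENNReal.ofReal Real.pi)⁻¹ •
      volume.restrict (Metric.closedBall (0 : EuclideanSpace ℝ (Fin 2)) 1))
    {u : EuclideanSpace ℝ (Fin 2)} (hu : ‖u‖ = 1) {t : ℝ} (ht1 : -1 ≤ t) (ht2 : t ≤ 1) :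
    P (hsp 2 u t) = ENNReal.ofReal ((Real.pi / 2 + Fcap t) / Real.pi) := by
  rw [hP, Measure.smul_apply, Measure.restrict_apply (hsp_measurableSet u t), smul_eq_mul,
    hsp_volume hu ht1 ht2, ENNReal.ofReal_div_of_pos Real.pi_pos, ENNReal.div_eq_inv_mul]

lemma exists_unit_vector (x : EuclideanSpace ℝ (Fin 2)) :
    ∃ u₀ : EuclideanSpace ℝ (Fin 2), ‖u₀‖ = 1 ∧ ⟪x, u₀⟫ = -‖x‖ := by
  by_cases hx0 : x = 0
  · refine ⟨EuclideanSpace.single 0 1, by simp [EuclideanSpace.norm_single], by simp [hx0]⟩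
  · have hn : ‖x‖ ≠ 0 := norm_ne_zero_iff.2 hx0
    refine ⟨(-‖x‖⁻¹) • x, ?_, ?_⟩
    · rw [norm_smul, norm_neg, norm_inv, norm_norm]
      field_simp
    · rw [real_inner_smul_right, real_inner_self_eq_norm_sq]
      field_simp

end Aux

/-- The halfspace depth of the uniform distribution on the closed unit disc in `ℝ²`. -/
theorem halfspace_depth_unit_disc
    (P : Measure (EuclideanSpace ℝ (Fin 2)))
    (hP : P = (ENNReal.ofReal Real.pi)⁻¹ •
      volume.restrict (Metric.closedBall (0 : EuclideanSpace ℝ (Fin 2)) 1)) :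
    (∀ x : EuclideanSpace ℝ (Fin 2), ‖x‖ ≤ 1 →
      HD P x = ENNReal.ofReal
        (1 / 2 - (1 / Real.pi) *
          (Real.arcsin ‖x‖ + ‖x‖ * Real.sqrt (1 - ‖x‖ ^ 2)))) ∧
    (∀ x : EuclideanSpace ℝ (Fin 2), 1 < ‖x‖ → HD P x = 0) := by
  have hπ : (0:ℝ) < Real.pi := Real.pi_pos
  constructor
  · intro x hx
    have hr0 : (0:ℝ) ≤ ‖x‖ := norm_nonneg x
    have htarget_eq : 1 / 2 - (1 / Real.pi) * (Real.arcsin ‖x‖ + ‖x‖ * Real.sqrt (1 - ‖x‖ ^ 2))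
        = (Real.pi / 2 + Fcap (-‖x‖)) / Real.pi := by
      rw [Fcap_neg]
      unfold Fcap
      field_simp
      ring
    obtain ⟨u₀, hu₀, hxu₀⟩ := exists_unit_vector x
    have hu₀ne : u₀ ≠ 0 := fun h => by simp [h] at hu₀
    apply le_antisymm
    · refine iInf_le_of_le u₀ (iInf_le_of_le hu₀ne (iInf_le_of_le (-‖x‖)
        (iInf_le_of_le (le_of_eq hxu₀) ?_)))
      rw [P_hsp hP hu₀ (by linarith) (by linarith), htarget_eq]
    · refine le_iInf fun u => le_iInf fun hu => le_iInf fun α => le_iInf fun hxα => ?_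
      have hc : (0:ℝ) < ‖u‖⁻¹ := inv_pos.2 (norm_pos_iff.2 hu)
      set u' := ‖u‖⁻¹ • u with hu'def
      have hu' : ‖u'‖ = 1 := by
        rw [hu'def, norm_smul, norm_inv, norm_norm]
        field_simp
      rw [hsp_normalize hu α]
      set t := ‖u‖⁻¹ * α with htdef
      have hxt : ⟪x, u'⟫ ≤ t := by
        rw [hu'def, real_inner_smul_right]
        exact mul_le_mul_of_nonneg_left hxα hc.le
      have hlow : -‖x‖ ≤ ⟪x, u'⟫ := by
        have h1 := abs_real_inner_le_norm x u'
        rw [hu', mul_one] at h1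
        linarith [(abs_le.1 h1).1]
      have ht1 : (-1:ℝ) ≤ t := by linarith
      by_cases ht : t ≤ 1
      · rw [P_hsp hP hu' ht1 ht]
        apply ENNReal.ofReal_le_ofReal
        rw [htarget_eq]
        have hmono : Fcap (-‖x‖) ≤ Fcap t := Fcap_mono (by linarith) ht (by linarith)
        gcongr
      · push_neg at ht
        have hsub : P (hsp 2 u' 1) ≤ P (hsp 2 u' t) :=
          measure_mono (fun z hz => le_trans hz ht.le)
        have h1 : P (hsp 2 u' 1) = 1 := by
          rw [P_hsp hP hu' (by norm_num) le_rfl, Fcap_one]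
          rw [show (Real.pi / 2 + Real.pi / 2) / Real.pi = 1 by field_simp; norm_num]
          exact ENNReal.ofReal_one
        refine le_trans ?_ (h1 ▸ hsub)
        apply ENNReal.ofReal_le_one.2
        have ha : 0 ≤ Real.arcsin ‖x‖ := Real.arcsin_nonneg.2 hr0
        have hb : 0 ≤ ‖x‖ * Real.sqrt (1 - ‖x‖ ^ 2) := by positivity
        have : 0 < 1 / Real.pi := by positivity
        nlinarith
  · intro x hx
    have hx0 : x ≠ 0 := fun h => by simp [h] at hx; linarith
    obtain ⟨u₀, hu₀, hxu₀⟩ := exists_unit_vector x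
    have hu₀ne : u₀ ≠ 0 := fun h => by simp [h] at hu₀
    have hempty : hsp 2 u₀ (-‖x‖) ∩ Metric.closedBall 0 1 = ∅ := by
      ext z
      simp only [Set.mem_inter_iff, Set.mem_empty_iff_false, iff_false, not_and, hsp,
        Set.mem_setOf_eq, mem_closedBall_zero_iff]
      intro hz hz1
      have h1 := abs_real_inner_le_norm z u₀
      rw [hu₀, mul_one] at h1
      have := (abs_le.1 h1).1
      linarith
    have hzero : P (hsp 2 u₀ (-‖x‖)) = 0 := by
      rw [hP, Measure.smul_apply, Measure.restrict_apply (hsp_measurableSet u₀ (-‖x‖)),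
        hempty, measure_empty, smul_eq_mul, mul_zero]
    refine le_antisymm ?_ (by simp)
    refine le_trans (iInf_le_of_le u₀ (iInf_le_of_le hu₀ne (iInf_le_of_le (-‖x‖)
      (iInf_le_of_le (le_of_eq hxu₀) (le_refl _))))) (le_of_eq hzero)
end

section
/- If a Borel probability measure P on ℝ^d is angularly symmetric around x_P (i.e. (X − x_P)/‖X − x_P‖ and −(X − x_P)/‖X − x_P‖ have the same distribution, for X ∼ P with X ≠ x_P a.s. outside {x_P}), then its halfspace depth at x_P satisfies HD(x_P;P) ≥ (1 + P({x_P}))/2. -/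
open MeasureTheory
open scoped ENNReal RealInnerProductSpace

/-- If `P` is angularly symmetric around `x_P`, then
`HD(x_P;P) ≥ (1 + P({x_P}))/2`. -/
theorem halfspace_depth_angularly_symmetric {d : ℕ}
    (P : Measure (EuclideanSpace ℝ (Fin d))) [IsProbabilityMeasure P]
    (xP : EuclideanSpace ℝ (Fin d))
    (hsym : Measure.map (fun v => -v)
        (Measure.map (fun z : EuclideanSpace ℝ (Fin d) => ‖z - xP‖⁻¹ • (z - xP))
          (P.restrict {xP}ᶜ)) =
      Measure.map (fun z : EuclideanSpace ℝ (Fin d) => ‖z - xP‖⁻¹ • (z - xP))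
        (P.restrict {xP}ᶜ)) :
    (1 + P {xP}) / 2 ≤ HD P xP := by

  refine le_iInf fun u => le_iInf fun hu => le_iInf fun α => le_iInf fun hx => ?_
  set f : EuclideanSpace ℝ (Fin d) → EuclideanSpace ℝ (Fin d) :=
    fun z => ‖z - xP‖⁻¹ • (z - xP) with hf_def
  have hf : Measurable f := by
    refine Measurable.smul (f := fun z : EuclideanSpace ℝ (Fin d) => ‖z - xP‖⁻¹) (g := fun z => z - xP) ?_ ?_
    · exact (measurable_norm.comp (measurable_id.sub measurable_const)).inv
    · exact measurable_id.sub measurable_const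
  set Q := P.restrict {xP}ᶜ with hQ_def
  set μ := Measure.map f Q with hμ_def
  set A : Set (EuclideanSpace ℝ (Fin d)) := {v | ⟪v, u⟫ ≤ 0} with hA_def
  set B : Set (EuclideanSpace ℝ (Fin d)) := {v | 0 ≤ ⟪v, u⟫} with hB_def
  have hAm : MeasurableSet A :=
    measurableSet_le ((continuous_id.inner continuous_const)).measurable measurable_const
  have hBm : MeasurableSet B :=
    measurableSet_le measurable_const ((continuous_id.inner continuous_const)).measurable
  have hxPm : MeasurableSet ({xP} : Set (EuclideanSpace ℝ (Fin d))) :=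
    measurableSet_singleton xP
  set p := P {xP} with hp_def
  have hp1 : p ≤ 1 := prob_le_one
  -- μ A = μ B via symmetry
  have hpre : (fun v : EuclideanSpace ℝ (Fin d) => -v) ⁻¹' B = A := by
    ext v
    simp [hA_def, hB_def, inner_neg_left, neg_nonneg]
  have hAB : μ B = μ A := by
    conv_lhs => rw [← hsym]
    rw [Measure.map_apply measurable_neg hBm, hpre]
  -- total mass of μ
  have hμuniv : μ Set.univ = 1 - p := by
    rw [hμ_def, Measure.map_apply hf MeasurableSet.univ, Set.preimage_univ, hQ_def,
      Measure.restrict_apply MeasurableSet.univ, Set.univ_inter,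
      prob_compl_eq_one_sub hxPm]
  have hunion : A ∪ B = Set.univ := by
    ext v; simp [hA_def, hB_def, le_total]
  have half : (1 - p) / 2 ≤ μ A := by
    have : μ Set.univ ≤ μ A + μ B := by
      rw [← hunion]; exact measure_union_le A B
    rw [hAB, hμuniv] at this
    have h2 : μ A + μ A = μ A * 2 := by ring
    rw [h2] at this
    exact ENNReal.div_le_of_le_mul this
  -- μ A ≤ P (hsp ∩ {xP}ᶜ)
  have hμA : μ A = P (f ⁻¹' A ∩ {xP}ᶜ) := by
    rw [hμ_def, Measure.map_apply hf hAm, hQ_def, Measure.restrict_apply (hf hAm)]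
  have hsub : f ⁻¹' A ∩ {xP}ᶜ ⊆ hsp d u α ∩ {xP}ᶜ := by
    rintro z ⟨hzA, hz⟩
    refine ⟨?_, hz⟩
    have hzne : z - xP ≠ 0 := sub_ne_zero.mpr (by simpa using hz)
    have hnorm : (0:ℝ) < ‖z - xP‖⁻¹ := inv_pos.mpr (norm_pos_iff.mpr hzne)
    have h1 : ‖z - xP‖⁻¹ * ⟪z - xP, u⟫ ≤ 0 := by
      rw [← real_inner_smul_left]; exact hzA
    have h2 : ⟪z - xP, u⟫ ≤ 0 := nonpos_of_mul_nonpos_right h1 hnorm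
    have h3 : ⟪z, u⟫ - ⟪xP, u⟫ ≤ 0 := by rwa [← inner_sub_left]
    have hxα : ⟪xP, u⟫ ≤ α := hx
    simp only [hsp, Set.mem_setOf_eq]
    linarith
  have hmono : μ A ≤ P (hsp d u α ∩ {xP}ᶜ) := by
    rw [hμA]; exact measure_mono hsub
  -- P (hsp) ≥ p + P(hsp ∩ {xP}ᶜ)
  have hsplit : p + P (hsp d u α ∩ {xP}ᶜ) ≤ P (hsp d u α) := by
    have hdisj : Disjoint ({xP} : Set (EuclideanSpace ℝ (Fin d))) (hsp d u α ∩ {xP}ᶜ) := by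
      refine Set.disjoint_left.mpr ?_
      rintro z rfl ⟨_, hz⟩
      exact hz rfl
    have hHm : MeasurableSet (hsp d u α) :=
      measurableSet_le ((continuous_id.inner continuous_const)).measurable measurable_const
    calc p + P (hsp d u α ∩ {xP}ᶜ) = P ({xP} ∪ (hsp d u α ∩ {xP}ᶜ)) := by
          rw [measure_union hdisj (hHm.inter hxPm.compl)]
      _ ≤ P (hsp d u α) := measure_mono (by
          rintro z (rfl | ⟨hz, _⟩)
          · exact hx
          · exact hz)
  -- arithmetic
  have harith : (1 + p) / 2 ≤ p + (1 - p) / 2 := by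
    have : 1 + p = p * 2 + (1 - p) := by
      rw [mul_two, add_assoc, add_tsub_cancel_of_le hp1]
      ring
    rw [this, ENNReal.add_div, mul_div_assoc,
      ENNReal.div_self two_ne_zero ENNReal.ofNat_ne_top, mul_one]
  calc (1 + p) / 2 ≤ p + (1 - p) / 2 := harith
    _ ≤ p + μ A := add_le_add le_rfl half
    _ ≤ p + P (hsp d u α ∩ {xP}ᶜ) := add_le_add le_rfl hmono
    _ ≤ P (hsp d u α) := hsplit
end

section
/- Let K be a convex body in ℝ^d containing the closed unit ball B. Define the rolling function r : ∂K → ℝ by r(x) = sup{ ‖x − z‖ : z ∈ K, B(z,‖x−z‖) ⊆ K }. Then for every t ∈ [0,1], the set { x ∈ ∂K : r(x) ≥ t } is closed and its (d−1)-dimensional Hausdorff measure satisfies (1−t)^{d−1} · vol_{d−1}(∂K) ≤ vol_{d−1}({ x ∈ ∂K : r(x) ≥ t }). -/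
open MeasureTheory
open scoped ENNReal RealInnerProductSpace
open scoped Pointwise NNReal

section RollingAux

variable {d : ℕ}

local notation "E" => EuclideanSpace ℝ (Fin d)

/-- Existence of the metric projection (variational characterization). -/
lemma rolling_proj_exists {C : Set E} (hne : C.Nonempty) (hcl : IsClosed C)
    (hconv : Convex ℝ C) (x : E) :
    ∃ p, p ∈ C ∧ ∀ w ∈ C, ⟪x - p, w - p⟫ ≤ 0 := by
  obtain ⟨p, hp, hmin⟩ := exists_norm_eq_iInf_of_complete_convex hne hcl.isComplete hconv x
  exact ⟨p, hp, (norm_eq_iInf_iff_real_inner_le_zero hconv hp).1 hmin⟩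

/-- The variational characterization implies the projection is 1-Lipschitz (and unique). -/
lemma rolling_proj_lip {C : Set E} {x₁ x₂ p₁ p₂ : E} (h₁ : p₁ ∈ C) (h₂ : p₂ ∈ C)
    (hv₁ : ∀ w ∈ C, ⟪x₁ - p₁, w - p₁⟫ ≤ 0) (hv₂ : ∀ w ∈ C, ⟪x₂ - p₂, w - p₂⟫ ≤ 0) :
    ‖p₁ - p₂‖ ≤ ‖x₁ - x₂‖ := by
  have hA := hv₁ p₂ h₂
  have hB := hv₂ p₁ h₁
  have key : ‖p₁ - p₂‖ ^ 2 ≤ ⟪x₁ - x₂, p₁ - p₂⟫ := by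
    have hid : ⟪x₁ - x₂, p₁ - p₂⟫ - ⟪p₁ - p₂, p₁ - p₂⟫
        = -⟪x₁ - p₁, p₂ - p₁⟫ - ⟪x₂ - p₂, p₁ - p₂⟫ := by
      simp only [inner_sub_left, inner_sub_right]
      ring
    have h2 : ⟪p₁ - p₂, p₁ - p₂⟫ = ‖p₁ - p₂‖ ^ 2 := real_inner_self_eq_norm_sq _
    nlinarith [hid, hA, hB]
  have hCS : ⟪x₁ - x₂, p₁ - p₂⟫ ≤ ‖x₁ - x₂‖ * ‖p₁ - p₂‖ := real_inner_le_norm _ _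
  rcases eq_or_lt_of_le (norm_nonneg (p₁ - p₂)) with h0 | h0
  · rw [← h0]; exact norm_nonneg _
  · have : ‖p₁ - p₂‖ * ‖p₁ - p₂‖ ≤ ‖x₁ - x₂‖ * ‖p₁ - p₂‖ := by nlinarith
    exact le_of_mul_le_mul_right this h0

/-- Exit point of a ray from a point of a compact set. -/
lemma rolling_exit_point {C : Set E} (hC : IsCompact C) {z u : E} (hz : z ∈ C) (hu : u ≠ 0) :
    ∃ s₀ : ℝ, 0 ≤ s₀ ∧ z + s₀ • u ∈ frontier C := by
  have hucont : Continuous fun s : ℝ => z + s • u :=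
    continuous_const.add (continuous_id.smul continuous_const)
  set A : Set ℝ := {s : ℝ | 0 ≤ s ∧ z + s • u ∈ C} with hA
  have hAne : A.Nonempty := ⟨0, le_refl 0, by simpa using hz⟩
  obtain ⟨R, hR⟩ := hC.isBounded.subset_closedBall 0
  have hupos : (0:ℝ) < ‖u‖ := norm_pos_iff.2 hu
  have hAbdd : BddAbove A := by
    refine ⟨(R + ‖z‖) / ‖u‖, fun s hs => ?_⟩
    have h1 : ‖z + s • u‖ ≤ R := by
      have := hR hs.2
      simpa [Metric.mem_closedBall, dist_eq_norm] using this
    have h2 : s * ‖u‖ = ‖s • u‖ := by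
      rw [norm_smul, Real.norm_eq_abs, abs_of_nonneg hs.1]
    have h3 : ‖s • u‖ ≤ ‖z + s • u‖ + ‖z‖ := by
      have e : (z + s • u) - z = s • u := by abel
      calc ‖s • u‖ = ‖(z + s • u) - z‖ := by rw [e]
        _ ≤ _ := norm_sub_le _ _
    rw [le_div_iff₀ hupos]
    nlinarith
  have hAcl : IsClosed A := by
    have : A = Set.Ici (0:ℝ) ∩ (fun s : ℝ => z + s • u) ⁻¹' C := by
      ext s; simp [hA, Set.mem_Ici, and_comm]
    rw [this]
    exact isClosed_Ici.inter (hC.isClosed.preimage hucont)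
  obtain ⟨b, hb⟩ := id hAbdd
  have hAsub : A ⊆ Set.Icc 0 b := fun s hs => ⟨hs.1, hb hs⟩
  have hAcomp : IsCompact A := (isCompact_Icc).of_isClosed_subset hAcl hAsub
  have hs₀ : sSup A ∈ A := hAcomp.sSup_mem hAne
  refine ⟨sSup A, hs₀.1, ?_⟩
  rw [hC.isClosed.frontier_eq]
  refine ⟨hs₀.2, fun hint => ?_⟩
  obtain ⟨ε, hε, hball⟩ := Metric.isOpen_iff.1 isOpen_interior _ hint
  have hδ : 0 < ε / (2 * ‖u‖) := by positivity
  have hmem : sSup A + ε / (2 * ‖u‖) ∈ A := by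
    constructor
    · linarith [hs₀.1]
    · have : z + (sSup A + ε / (2 * ‖u‖)) • u ∈ Metric.ball (z + sSup A • u) ε := by
        rw [Metric.mem_ball, dist_eq_norm]
        have heq : z + (sSup A + ε / (2 * ‖u‖)) • u - (z + sSup A • u)
            = (ε / (2 * ‖u‖)) • u := by
          rw [add_smul]; abel
        rw [heq, norm_smul, Real.norm_eq_abs, abs_of_pos hδ]
        rw [div_mul_eq_mul_div, mul_comm (2:ℝ) ‖u‖, ← div_div]
        rw [mul_div_assoc, div_self hupos.ne', mul_one]
        linarith
      exact interior_subset (hball this)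
  have := le_csSup hAbdd hmem
  linarith

/-- Supporting functional at a boundary point of a convex set with nonempty interior. -/
lemma rolling_support_normal {C : Set E} (hconv : Convex ℝ C)
    (hint : (interior C).Nonempty) {z : E} (hz : z ∈ frontier C) :
    ∃ u : E, u ≠ 0 ∧ ∀ c ∈ C, ⟪c - z, u⟫ ≤ 0 := by
  have hzni : z ∉ interior C := fun h => hz.2 h
  obtain ⟨f, hf⟩ := geometric_hahn_banach_open_point hconv.interior isOpen_interior hzni
  obtain ⟨a, ha⟩ := hint
  have hle : ∀ c ∈ C, f c ≤ f z := by
    intro c hc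
    by_contra hlt
    push_neg at hlt
    have key : ∀ l : ℝ, 0 < l → l ≤ 1 → l * f a + (1 - l) * f c < f z := by
      intro l hl0 hl1
      have hmem : l • a + (1 - l) • c ∈ interior C :=
        hconv.combo_interior_self_mem_interior ha hc hl0 (by linarith) (by ring)
      have := hf _ hmem
      simpa [map_add, _root_.map_smul, smul_eq_mul] using this
    -- take l → 0
    have hfc : f c ≤ f z := by
      have htend : Filter.Tendsto (fun l : ℝ => l * f a + (1 - l) * f c)
          (nhdsWithin 0 (Set.Ioi 0)) (nhds (f c)) := by
        have hcont : Continuous (fun l : ℝ => l * f a + (1 - l) * f c) := by continuity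
        have := hcont.tendsto 0
        simp only [zero_mul, sub_zero, one_mul, zero_add] at this
        exact this.mono_left nhdsWithin_le_nhds
      refine le_of_tendsto htend ?_
      filter_upwards [Ioo_mem_nhdsGT_of_mem (Set.mem_Ico.2 ⟨le_refl _, zero_lt_one⟩)]
        with l hl
      exact (key l hl.1 hl.2.le).le
    linarith
  set u : E := (InnerProductSpace.toDual ℝ _).symm f with hu
  have hinner : ∀ y : E, ⟪u, y⟫ = f y := fun y => InnerProductSpace.toDual_symm_apply
  refine ⟨u, ?_, ?_⟩
  · intro h0
    have hfa := hf a ha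
    have h1 : f a = 0 := by rw [← hinner a, h0, inner_zero_left]
    have h2 : f z = 0 := by rw [← hinner z, h0, inner_zero_left]
    rw [h1, h2] at hfa
    exact lt_irrefl _ hfa
  · intro c hc
    rw [real_inner_comm, hinner (c - z), map_sub]
    linarith [hle c hc]

/-- If the closed ball around `z ∈ K` of radius `s ≤ infDist z Kᶜ` then it is inside `K`. -/
lemma rolling_ball_subset {K : Set E} (hcl : IsClosed K) {z : E} (hz : z ∈ K) {s : ℝ}
    (hs : s ≤ Metric.infDist z Kᶜ) : Metric.closedBall z s ⊆ K := by
  intro w hw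
  by_contra hwK
  have hwz : w ≠ z := fun h => hwK (h ▸ hz)
  set D := dist z w with hD
  have hD0 : 0 < D := dist_pos.2 (Ne.symm hwz)
  obtain ⟨ε, hε, hball⟩ := Metric.isOpen_iff.1 hcl.isOpen_compl w hwK
  set δ := min (ε / 2) (D / 2) with hδdef
  have hδ0 : 0 < δ := lt_min (by linarith) (by linarith)
  have hδD : δ ≤ D / 2 := min_le_right _ _
  have hδε : δ < ε := lt_of_le_of_lt (min_le_left _ _) (by linarith)
  set w' := w + (δ / D) • (z - w) with hw'
  have hww' : dist w w' = δ := by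
    rw [dist_eq_norm]
    have e : w - w' = (-(δ / D)) • (z - w) := by rw [hw']; module
    rw [e, norm_smul, Real.norm_eq_abs, abs_neg, abs_of_pos (by positivity)]
    rw [← dist_eq_norm z w, ← hD]
    field_simp
  have hw'K : w' ∈ Kᶜ := hball (by rw [Metric.mem_ball, dist_comm]; rw [hww']; exact hδε)
  have hzw' : dist z w' = D - δ := by
    rw [dist_eq_norm]
    have e : z - w' = (1 - δ / D) • (z - w) := by rw [hw']; module
    rw [e, norm_smul, Real.norm_eq_abs, abs_of_nonneg (by
      have : δ / D ≤ 1 := by rw [div_le_one hD0]; linarith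
      linarith)]
    rw [← dist_eq_norm z w, ← hD]
    field_simp
  have h1 : Metric.infDist z Kᶜ ≤ D - δ := by
    rw [← hzw']
    exact Metric.infDist_le_dist_of_mem hw'K
  have h2 : D ≤ s := by rw [hD, dist_comm]; exact Metric.mem_closedBall.1 hw
  linarith

/-- Conversely, if the closed ball is inside `K` then the radius is at most `infDist z Kᶜ`. -/
lemma rolling_le_infDist {K : Set E} (hne : Kᶜ.Nonempty) {z : E} {s : ℝ}
    (hsub : Metric.closedBall z s ⊆ K) : s ≤ Metric.infDist z Kᶜ := by
  by_contra h
  push_neg at h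
  obtain ⟨y, hy, hdy⟩ := (Metric.infDist_lt_iff hne).1 h
  exact hy (hsub (by rw [Metric.mem_closedBall, dist_comm]; exact hdy.le))

end RollingAux

section RollingMain

set_option maxHeartbeats 1000000

/-- Rolling-function estimate of Schütt and Werner: if the unit ball rolls inside a
convex body `K` containing it, then for every `t ∈ [0,1]` the set of boundary points
with rolling radius at least `t` is closed and has `(d-1)`-dimensional Hausdorff
measure at least `(1-t)^{d-1}` times that of `∂K`. -/
theorem rolling_function_estimate {d : ℕ}
    (K : Set (EuclideanSpace ℝ (Fin d))) (hKc : IsCompact K) (hKconv : Convex ℝ K)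
    (hKint : (interior K).Nonempty)
    (hB : Metric.closedBall (0 : EuclideanSpace ℝ (Fin d)) 1 ⊆ K)
    (r : EuclideanSpace ℝ (Fin d) → ℝ)
    (hr : ∀ x, r x = sSup {s : ℝ | ∃ z ∈ K, s = ‖x - z‖ ∧
      Metric.closedBall z ‖x - z‖ ⊆ K})
    (t : ℝ) (ht : t ∈ Set.Icc (0 : ℝ) 1) :
    IsClosed {x | x ∈ frontier K ∧ t ≤ r x} ∧
    ENNReal.ofReal ((1 - t) ^ (d - 1)) *
        Measure.hausdorffMeasure ((d : ℝ) - 1) (frontier K) ≤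
      Measure.hausdorffMeasure ((d : ℝ) - 1) {x | x ∈ frontier K ∧ t ≤ r x} := by
  have hKcl : IsClosed K := hKc.isClosed
  have hKfr : frontier K = K \ interior K := hKcl.frontier_eq
  have h0K : (0 : EuclideanSpace ℝ (Fin d)) ∈ K := hB (Metric.mem_closedBall_self zero_le_one)
  obtain ⟨R, hR⟩ := hKc.isBounded.subset_closedBall 0
  have hA_bdd : ∀ x : EuclideanSpace ℝ (Fin d),
      BddAbove {s : ℝ | ∃ z ∈ K, s = ‖x - z‖ ∧ Metric.closedBall z ‖x - z‖ ⊆ K} := by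
    intro x
    refine ⟨‖x‖ + R, ?_⟩
    rintro s ⟨z, hz, rfl, -⟩
    have hzR : ‖z‖ ≤ R := by
      simpa [Metric.mem_closedBall, dist_eq_norm] using hR hz
    calc ‖x - z‖ ≤ ‖x‖ + ‖z‖ := norm_sub_le _ _
      _ ≤ ‖x‖ + R := by linarith
  have hr_ge : ∀ x : EuclideanSpace ℝ (Fin d), ∀ s : ℝ,
      s ∈ {s : ℝ | ∃ z ∈ K, s = ‖x - z‖ ∧ Metric.closedBall z ‖x - z‖ ⊆ K} → s ≤ r x := by
    intro x s hs; rw [hr x]; exact le_csSup (hA_bdd x) hs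
  have hzeroA : ∀ x ∈ K, (0:ℝ) ∈
      {s : ℝ | ∃ z ∈ K, s = ‖x - z‖ ∧ Metric.closedBall z ‖x - z‖ ⊆ K} := by
    intro x hx
    refine ⟨x, hx, by simp, ?_⟩
    rw [sub_self, norm_zero, Metric.closedBall_zero]
    exact Set.singleton_subset_iff.2 hx
  rcases Nat.eq_zero_or_pos d with hd0 | hd1
  · -- d = 0 : the space is a single point, the frontier is empty
    subst hd0
    haveI : Subsingleton (EuclideanSpace ℝ (Fin 0)) :=
      ⟨fun a b => PiLp.ext fun i => Fin.elim0 i⟩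
    obtain ⟨a, ha⟩ := hKint
    have huniv : interior K = Set.univ :=
      Set.eq_univ_of_forall (fun x => by rwa [Subsingleton.elim x a])
    have hfr : frontier K = ∅ := by
      rw [hKfr, huniv, Set.diff_univ]
    have hset : {x | x ∈ frontier K ∧ t ≤ r x} = (∅ : Set (EuclideanSpace ℝ (Fin 0))) := by
      rw [hfr]; simp
    rw [hset, hfr]
    simp
  -- from here on, 1 ≤ d
  haveI hnt : Nontrivial (EuclideanSpace ℝ (Fin d)) := by
    refine ⟨EuclideanSpace.single ⟨0, hd1⟩ (1:ℝ), 0, fun h => ?_⟩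
    have h2 := congrArg (fun v : EuclideanSpace ℝ (Fin d) => v ⟨0, hd1⟩) h
    simp [EuclideanSpace.single_apply] at h2
  have hcompl : Kᶜ.Nonempty := Set.nonempty_compl.2 hKc.ne_univ
  rcases eq_or_lt_of_le ht.1 with ht0 | ht0
  · -- t = 0
    have hset : {x | x ∈ frontier K ∧ t ≤ r x} = frontier K := by
      ext x
      simp only [Set.mem_setOf_eq]
      refine ⟨fun h => h.1, fun h => ⟨h, ?_⟩⟩
      have hxK : x ∈ K := (hKfr ▸ h).1
      rw [← ht0]
      exact hr_ge x 0 (hzeroA x hxK)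
    rw [hset, ← ht0]
    exact ⟨isClosed_frontier, by simp⟩
  -- 0 < t
  set T : Set (EuclideanSpace ℝ (Fin d)) := {z | Metric.closedBall z t ⊆ K} with hTdef
  have hTK : T ⊆ K := fun z hz => hz (Metric.mem_closedBall_self ht0.le)
  have hT0 : (0 : EuclideanSpace ℝ (Fin d)) ∈ T :=
    fun w hw => hB (Metric.closedBall_subset_closedBall ht.2 hw)
  have hTeq : T = K ∩ {z | t ≤ Metric.infDist z Kᶜ} := by
    ext z
    constructor
    · intro hz; exact ⟨hTK hz, rolling_le_infDist hcompl hz⟩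
    · intro hz; exact rolling_ball_subset hKcl hz.1 hz.2
  have hTcl : IsClosed T := by
    rw [hTeq]
    exact hKcl.inter (isClosed_le continuous_const (Metric.continuous_infDist_pt _))
  have hTcomp : IsCompact T := hKc.of_isClosed_subset hTcl hTK
  have hTne : T.Nonempty := ⟨0, hT0⟩
  have hTconv : Convex ℝ T := by
    intro z₁ h₁ z₂ h₂ a b ha hb hab
    intro w hw
    set v := w - (a • z₁ + b • z₂) with hvdef
    have hnv : ‖v‖ ≤ t := by rw [hvdef, ← dist_eq_norm]; exact Metric.mem_closedBall.1 hw
    have h1 : z₁ + v ∈ K := h₁ (by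
      rw [Metric.mem_closedBall, dist_eq_norm, add_sub_cancel_left]; exact hnv)
    have h2 : z₂ + v ∈ K := h₂ (by
      rw [Metric.mem_closedBall, dist_eq_norm, add_sub_cancel_left]; exact hnv)
    have hw' : a • (z₁ + v) + b • (z₂ + v) = w := by
      have e : a • (z₁ + v) + b • (z₂ + v) = (a • z₁ + b • z₂) + (a + b) • v := by module
      rw [e, hab, one_smul, hvdef]
      abel
    rw [← hw']
    exact hKconv h1 h2 ha hb hab
  -- characterization of the rolling set as a closed set
  have hSeq : {x | x ∈ frontier K ∧ t ≤ r x}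
      = frontier K ∩ {x | Metric.infDist x T ≤ t} := by
    ext x
    simp only [Set.mem_setOf_eq, Set.mem_inter_iff]
    constructor
    · rintro ⟨hxfr, hxr⟩
      refine ⟨hxfr, ?_⟩
      have hxK : x ∈ K := (hKfr ▸ hxfr).1
      set D := {z | z ∈ K ∧ Metric.closedBall z ‖x - z‖ ⊆ K} with hDdef
      have hDeq : D = K ∩ {z | ‖x - z‖ ≤ Metric.infDist z Kᶜ} := by
        ext z
        constructor
        · intro hz; exact ⟨hz.1, rolling_le_infDist hcompl hz.2⟩
        · intro hz; exact ⟨hz.1, rolling_ball_subset hKcl hz.1 hz.2⟩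
      have hDcl : IsClosed D := by
        rw [hDeq]
        exact hKcl.inter (isClosed_le (Continuous.norm (continuous_const.sub continuous_id))
          (Metric.continuous_infDist_pt _))
      have hDcomp : IsCompact D := hKc.of_isClosed_subset hDcl (fun z hz => hz.1)
      have hDne : D.Nonempty := by
        refine ⟨x, hxK, ?_⟩
        rw [sub_self, norm_zero, Metric.closedBall_zero]
        exact Set.singleton_subset_iff.2 hxK
      obtain ⟨z₀, hz₀D, hz₀max⟩ := hDcomp.exists_isMaxOn hDne
        ((continuous_const.sub continuous_id).norm.continuousOn)
      have hrle : r x ≤ ‖x - z₀‖ := by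
        rw [hr]
        refine csSup_le ⟨0, hzeroA x hxK⟩ ?_
        rintro s ⟨z, hzK, rfl, hsub⟩
        exact hz₀max ⟨hzK, hsub⟩
      have hs₀t : t ≤ ‖x - z₀‖ := le_trans hxr hrle
      have hs₀pos : 0 < ‖x - z₀‖ := lt_of_lt_of_le ht0 hs₀t
      set z := x + (t / ‖x - z₀‖) • (z₀ - x) with hzdef
      have hxz : ‖x - z‖ = t := by
        have e : x - z = (t / ‖x - z₀‖) • (x - z₀) := by rw [hzdef]; module
        rw [e, norm_smul, Real.norm_eq_abs, abs_of_pos (by positivity)]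
        field_simp
      have hzz₀ : dist z z₀ = ‖x - z₀‖ - t := by
        rw [dist_eq_norm]
        have e : z - z₀ = (1 - t / ‖x - z₀‖) • (x - z₀) := by rw [hzdef]; module
        rw [e, norm_smul, Real.norm_eq_abs, abs_of_nonneg (by
          rw [sub_nonneg, div_le_one hs₀pos]; exact hs₀t)]
        field_simp
      have hzT : z ∈ T := by
        intro w hw
        refine hz₀D.2 (Metric.closedBall_subset_closedBall' ?_ hw)
        rw [hzz₀]
        linarith
      calc Metric.infDist x T ≤ dist x z := Metric.infDist_le_dist_of_mem hzT
        _ = t := by rw [dist_eq_norm, hxz]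
    · rintro ⟨hxfr, hxd⟩
      refine ⟨hxfr, ?_⟩
      obtain ⟨z, hzT, hdz⟩ := hTcomp.exists_infDist_eq_dist hTne x
      have hdzt : dist x z ≤ t := by rw [← hdz]; exact hxd
      have hge : t ≤ dist x z := by
        by_contra hlt
        push_neg at hlt
        have hxint : x ∈ interior K :=
          interior_maximal (fun w hw => hzT (Metric.ball_subset_closedBall hw))
            Metric.isOpen_ball (Metric.mem_ball.2 hlt)
        exact (hKfr ▸ hxfr).2 hxint
      have hdzeq : dist x z = t := le_antisymm hdzt hge
      have hnxz : ‖x - z‖ = t := by rw [← dist_eq_norm]; exact hdzeq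
      refine hr_ge x t ⟨z, hTK hzT, hnxz.symm, ?_⟩
      rw [hnxz]
      exact hzT
  have hclosed : IsClosed {x | x ∈ frontier K ∧ t ≤ r x} := by
    rw [hSeq]
    exact isClosed_frontier.inter (isClosed_le (Metric.continuous_infDist_pt T) continuous_const)
  refine ⟨hclosed, ?_⟩
  rcases eq_or_lt_of_le (show 1 ≤ d from hd1) with hd1' | hd2
  · -- d = 1 : every boundary point has rolling radius ≥ t
    have hS : {x | x ∈ frontier K ∧ t ≤ r x} = frontier K := by
      ext x
      simp only [Set.mem_setOf_eq]
      refine ⟨fun h => h.1, fun hxfr => ⟨hxfr, ?_⟩⟩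
      have hxK : x ∈ K := (hKfr ▸ hxfr).1
      have hxnotint : x ∉ interior K := (hKfr ▸ hxfr).2
      have hball1 : Metric.ball (0 : EuclideanSpace ℝ (Fin d)) 1 ⊆ interior K :=
        interior_maximal (fun w hw => hB (Metric.ball_subset_closedBall hw)) Metric.isOpen_ball
      have hx1 : 1 ≤ ‖x‖ := by
        by_contra hlt
        push_neg at hlt
        exact hxnotint (hball1 (by rwa [Metric.mem_ball, dist_zero_right]))
      have hν0 : (0:ℝ) < ‖x‖ := by linarith
      set v : EuclideanSpace ℝ (Fin d) := ‖x‖⁻¹ • x with hv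
      have hvnorm : ‖v‖ = 1 := by
        rw [hv, norm_smul, Real.norm_eq_abs, abs_of_pos (by positivity),
          inv_mul_cancel₀ hν0.ne']
      have hvne : v ≠ 0 := by
        intro h
        rw [h, norm_zero] at hvnorm
        linarith
      have hxv : x = ‖x‖ • v := by
        rw [hv, smul_smul, mul_inv_cancel₀ hν0.ne', one_smul]
      have hnegv : -v ∈ K := hB (by
        rw [Metric.mem_closedBall, dist_zero_right, norm_neg, hvnorm])
      set z : EuclideanSpace ℝ (Fin d) := x - t • v with hz
      have hsub : Metric.closedBall z t ⊆ K := by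
        intro w hw
        have htop : Submodule.span ℝ ({v} : Set (EuclideanSpace ℝ (Fin d))) = ⊤ := by
          apply Submodule.eq_top_of_finrank_eq
          rw [finrank_span_singleton hvne, finrank_euclideanSpace_fin]
          omega
        have hmem : w - z ∈ Submodule.span ℝ ({v} : Set (EuclideanSpace ℝ (Fin d))) := by
          rw [htop]; trivial
        obtain ⟨cc, hc⟩ := Submodule.mem_span_singleton.1 hmem
        have hcabs : |cc| ≤ t := by
          have h' : ‖w - z‖ ≤ t := by rw [← dist_eq_norm]; exact Metric.mem_closedBall.1 hw
          rwa [← hc, norm_smul, Real.norm_eq_abs, hvnorm, mul_one] at h'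
        set lam := (t - cc) / (‖x‖ + 1) with hlam
        have habs1 := le_abs_self cc
        have habs2 := neg_abs_le cc
        have hs0 : 0 ≤ lam := div_nonneg (by linarith) (by linarith)
        have hs1 : lam ≤ 1 := by
          rw [hlam, div_le_one (by linarith)]
          have ht1 := ht.2
          linarith
        have hwv : w = (‖x‖ + (cc - t)) • v := by
          have hw2 : w = z + cc • v := by rw [hc]; abel
          rw [hw2, hz]
          nth_rewrite 1 [hxv]
          module
        have hwrep : w = (1 - lam) • x + lam • (-v) := by
          have hcoef : (‖x‖ + (cc - t)) = (1 - lam) * ‖x‖ + lam * (-1) := by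
            rw [hlam]
            field_simp
            ring
          calc w = (‖x‖ + (cc - t)) • v := hwv
            _ = ((1 - lam) * ‖x‖ + lam * (-1)) • v := by rw [hcoef]
            _ = (1 - lam) • (‖x‖ • v) + lam • (-v) := by module
            _ = (1 - lam) • x + lam • (-v) := by rw [← hxv]
        rw [hwrep]
        exact hKconv hxK hnegv (by linarith) hs0 (by ring)
      have hzK : z ∈ K := hsub (Metric.mem_closedBall_self ht0.le)
      have hxzt : ‖x - z‖ = t := by
        have e : x - z = t • v := by rw [hz]; abel
        rw [e, norm_smul, Real.norm_eq_abs, hvnorm, mul_one, abs_of_pos ht0]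
      refine hr_ge x t ⟨z, hzK, hxzt.symm, ?_⟩
      rw [hxzt]
      exact hsub
    rw [hS]
    have hd10 : d - 1 = 0 := by omega
    rw [hd10]
    simp
  -- 2 ≤ d
  rcases eq_or_lt_of_le ht.2 with ht1 | ht1
  · -- t = 1 : the left-hand side vanishes
    rw [ht1]
    have hz : (1 - (1:ℝ)) ^ (d - 1) = 0 := by
      rw [sub_self]
      exact zero_pow (by omega)
    rw [hz]
    simp
  -- 0 < t < 1 : the main estimate
  have h1t : (0:ℝ) < 1 - t := by linarith
  have he : (0:ℝ) ≤ (d:ℝ) - 1 := by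
    have : (1:ℝ) ≤ (d:ℝ) := by exact_mod_cast hd1
    linarith
  set C₁ : Set (EuclideanSpace ℝ (Fin d)) := (1 - t) • K with hC₁def
  have hC₁conv : Convex ℝ C₁ := hKconv.smul (1 - t)
  have hC₁comp : IsCompact C₁ := by
    rw [hC₁def, ← Set.image_smul]
    exact hKc.image (continuous_const_smul (1 - t))
  have hC₁cl : IsClosed C₁ := hC₁comp.isClosed
  have hC₁ne : C₁.Nonempty := ⟨(1 - t) • 0, Set.smul_mem_smul_set h0K⟩
  have hC₁int : (interior C₁).Nonempty := by
    rw [hC₁def, interior_smul₀ h1t.ne' K]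
    exact hKint.smul_set
  have hC₁T : C₁ ⊆ T := by
    rintro _ ⟨k, hk, rfl⟩
    intro w hw
    have hnw : ‖w - (1 - t) • k‖ ≤ t := by
      rw [← dist_eq_norm]; exact Metric.mem_closedBall.1 hw
    have hnb : ‖t⁻¹ • (w - (1 - t) • k)‖ ≤ 1 := by
      rw [norm_smul, Real.norm_eq_abs, abs_of_pos (by positivity)]
      rw [inv_mul_le_one₀ ht0]
      exact hnw
    have hbK : t⁻¹ • (w - (1 - t) • k) ∈ K := hB (by
      rwa [Metric.mem_closedBall, dist_zero_right])
    have hwrep : (1 - t) • k + t • (t⁻¹ • (w - (1 - t) • k)) = w := by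
      rw [smul_smul, mul_inv_cancel₀ ht0.ne', one_smul]
      abel
    rw [← hwrep]
    exact hKconv hk hbK h1t.le ht0.le (by ring)
  have hinj : Function.Injective (fun y : EuclideanSpace ℝ (Fin d) => (1 - t) • y) :=
    smul_right_injective _ h1t.ne'
  have hfrC₁ : frontier C₁ = (1 - t) • frontier K := by
    rw [hC₁cl.frontier_eq, hKfr, hC₁def, interior_smul₀ h1t.ne' K]
    simp only [← Set.image_smul]
    exact (Set.image_diff hinj _ _).symm
  have hscale : μH[(d:ℝ) - 1] (frontier C₁)
      = (‖(1 - t)‖₊ ^ ((d:ℝ) - 1) : ℝ≥0) • μH[(d:ℝ) - 1] (frontier K) := by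
    rw [hfrC₁]
    exact MeasureTheory.Measure.hausdorffMeasure_smul₀ he h1t.ne' _
  have hconst : ENNReal.ofReal ((1 - t) ^ (d - 1))
      = ((‖(1 - t)‖₊ ^ ((d:ℝ) - 1) : ℝ≥0) : ℝ≥0∞) := by
    have h2 : ((d:ℝ) - 1) = ((d - 1 : ℕ) : ℝ) := by
      rw [Nat.cast_sub hd1, Nat.cast_one]
    rw [h2, NNReal.rpow_natCast]
    have h3 : ‖(1 - t)‖₊ = (1 - t).toNNReal := by
      ext
      simp [Real.norm_of_nonneg h1t.le, Real.coe_toNNReal _ h1t.le]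
    rw [h3, ← Real.toNNReal_pow h1t.le]
    rfl
  -- Step B : projection onto C₁ maps ∂T onto ∂C₁
  set P₁ : EuclideanSpace ℝ (Fin d) → EuclideanSpace ℝ (Fin d) :=
    fun w => Classical.choose (rolling_proj_exists hC₁ne hC₁cl hC₁conv w) with hP₁def
  have hP₁spec : ∀ w, P₁ w ∈ C₁ ∧ ∀ q ∈ C₁, ⟪w - P₁ w, q - P₁ w⟫ ≤ 0 :=
    fun w => Classical.choose_spec (rolling_proj_exists hC₁ne hC₁cl hC₁conv w)
  have hP₁lip : LipschitzOnWith 1 P₁ (frontier T) := by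
    apply LipschitzOnWith.of_dist_le_mul
    intro a ha b hb
    rw [NNReal.coe_one, one_mul, dist_eq_norm, dist_eq_norm]
    exact rolling_proj_lip (hP₁spec a).1 (hP₁spec b).1 (hP₁spec a).2 (hP₁spec b).2
  have hP₁surj : frontier C₁ ⊆ P₁ '' (frontier T) := by
    intro z hz
    have hzC₁ : z ∈ C₁ := hC₁cl.frontier_subset hz
    obtain ⟨u, hu0, hsupp⟩ := rolling_support_normal hC₁conv hC₁int hz
    obtain ⟨s₀, hs₀, hw⟩ := rolling_exit_point hTcomp (hC₁T hzC₁) hu0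
    refine ⟨z + s₀ • u, hw, ?_⟩
    have hcand : ∀ q ∈ C₁, ⟪(z + s₀ • u) - z, q - z⟫ ≤ 0 := by
      intro q hq
      have e : (z + s₀ • u) - z = s₀ • u := by abel
      rw [e, real_inner_smul_left]
      have h2 : ⟪u, q - z⟫ ≤ 0 := by rw [real_inner_comm]; exact hsupp q hq
      exact mul_nonpos_of_nonneg_of_nonpos hs₀ h2
    have hle := rolling_proj_lip (hP₁spec (z + s₀ • u)).1 hzC₁
      (hP₁spec (z + s₀ • u)).2 hcand
    rw [sub_self, norm_zero] at hle
    exact sub_eq_zero.1 (norm_le_zero_iff.1 hle)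
  have hstepB : μH[(d:ℝ) - 1] (frontier C₁) ≤ μH[(d:ℝ) - 1] (frontier T) := by
    calc μH[(d:ℝ) - 1] (frontier C₁) ≤ μH[(d:ℝ) - 1] (P₁ '' (frontier T)) :=
          measure_mono hP₁surj
      _ ≤ ((1:ℝ≥0) : ℝ≥0∞) ^ ((d:ℝ) - 1) * μH[(d:ℝ) - 1] (frontier T) :=
          hP₁lip.hausdorffMeasure_image_le he
      _ = μH[(d:ℝ) - 1] (frontier T) := by simp
  -- Step C : projection onto T maps the rolling set onto ∂T
  set P₂ : EuclideanSpace ℝ (Fin d) → EuclideanSpace ℝ (Fin d) :=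
    fun w => Classical.choose (rolling_proj_exists hTne hTcl hTconv w) with hP₂def
  have hP₂spec : ∀ w, P₂ w ∈ T ∧ ∀ q ∈ T, ⟪w - P₂ w, q - P₂ w⟫ ≤ 0 :=
    fun w => Classical.choose_spec (rolling_proj_exists hTne hTcl hTconv w)
  have hP₂lip : LipschitzOnWith 1 P₂ {x | x ∈ frontier K ∧ t ≤ r x} := by
    apply LipschitzOnWith.of_dist_le_mul
    intro a ha b hb
    rw [NNReal.coe_one, one_mul, dist_eq_norm, dist_eq_norm]
    exact rolling_proj_lip (hP₂spec a).1 (hP₂spec b).1 (hP₂spec a).2 (hP₂spec b).2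
  have hP₂surj : frontier T ⊆ P₂ '' {x | x ∈ frontier K ∧ t ≤ r x} := by
    intro k hk
    have hkT : k ∈ T := hTcl.frontier_subset hk
    have hgle : t ≤ Metric.infDist k Kᶜ := rolling_le_infDist hcompl hkT
    have hgeq : Metric.infDist k Kᶜ = t := by
      by_contra hne'
      have hgt : t < Metric.infDist k Kᶜ := lt_of_le_of_ne hgle (Ne.symm hne')
      have hkint : k ∈ interior T := by
        rw [mem_interior]
        refine ⟨Metric.ball k (Metric.infDist k Kᶜ - t), ?_, Metric.isOpen_ball,
          Metric.mem_ball_self (by linarith)⟩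
        intro z' hz'
        have hdist : dist z' k < Metric.infDist k Kᶜ - t := Metric.mem_ball.1 hz'
        have hlip : dist (Metric.infDist z' Kᶜ) (Metric.infDist k Kᶜ) ≤ dist z' k := by
          have := (Metric.lipschitz_infDist_pt (Kᶜ : Set (EuclideanSpace ℝ (Fin d)))).dist_le_mul z' k
          rwa [NNReal.coe_one, one_mul] at this
        rw [Real.dist_eq] at hlip
        have habs := abs_le.1 hlip
        have hz'g : t < Metric.infDist z' Kᶜ := by linarith [habs.1]
        have hz'K : z' ∈ K := by
          by_contra hzK'
          have h0' : Metric.infDist z' Kᶜ = 0 := Metric.infDist_zero_of_mem hzK'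
          rw [h0'] at hz'g
          linarith
        exact rolling_ball_subset hKcl hz'K hz'g.le
      rw [hTcl.frontier_eq] at hk
      exact hk.2 hkint
    obtain ⟨w, hwcl, hdw⟩ := isClosed_closure.exists_infDist_eq_dist hcompl.closure k
    rw [Metric.infDist_closure, hgeq] at hdw
    have hdkw : dist k w = t := hdw.symm
    have hwK : w ∈ K := hkT (by rw [Metric.mem_closedBall, dist_comm]; exact hdkw.le)
    have hwfr : w ∈ frontier K := by
      rw [hKfr]
      exact ⟨hwK, by rw [← Set.mem_compl_iff, ← closure_compl]; exact hwcl⟩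
    have hnormwk : ‖w - k‖ = t := by rw [← dist_eq_norm, dist_comm]; exact hdkw
    have hvar : ∀ q ∈ T, ⟪w - k, q - k⟫ ≤ 0 := by
      intro q hq
      by_contra hpos
      push_neg at hpos
      set ε := min 1 (⟪w - k, q - k⟫ / (‖q - k‖ ^ 2 + 1)) with hεdef
      have hε0 : 0 < ε := lt_min one_pos (div_pos hpos (by positivity))
      have hε1 : ε ≤ 1 := min_le_left _ _
      have hεle : ε * (‖q - k‖ ^ 2 + 1) ≤ ⟪w - k, q - k⟫ := by
        have hmin := min_le_right 1 (⟪w - k, q - k⟫ / (‖q - k‖ ^ 2 + 1))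
        rw [← hεdef] at hmin
        calc ε * (‖q - k‖ ^ 2 + 1)
            ≤ (⟪w - k, q - k⟫ / (‖q - k‖ ^ 2 + 1)) * (‖q - k‖ ^ 2 + 1) :=
              mul_le_mul_of_nonneg_right hmin (by positivity)
          _ = ⟪w - k, q - k⟫ := by field_simp
      set k' := k + ε • (q - k) with hk'def
      have hk'T : k' ∈ T := by
        have e : k' = (1 - ε) • k + ε • q := by rw [hk'def]; module
        rw [e]
        exact hTconv hkT hq (by linarith) hε0.le (by ring)
      have hwk' : dist w k' < t := by
        rw [dist_eq_norm]
        have e : w - k' = (w - k) - ε • (q - k) := by rw [hk'def]; module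
        rw [e]
        have hsq : ‖(w - k) - ε • (q - k)‖ ^ 2 < t ^ 2 := by
          rw [norm_sub_sq_real, hnormwk, real_inner_smul_right, norm_smul,
            Real.norm_eq_abs, abs_of_pos hε0]
          nlinarith [hεle, hpos, hε0, sq_nonneg (ε * ‖q - k‖), norm_nonneg (q - k)]
        exact lt_of_pow_lt_pow_left₀ 2 ht0.le hsq
      have hwint : w ∈ interior K :=
        interior_maximal (fun y hy => hk'T (Metric.ball_subset_closedBall hy))
          Metric.isOpen_ball (Metric.mem_ball.2 hwk')
      exact ((hKfr ▸ hwfr).2) hwint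
    have hwS : w ∈ {x | x ∈ frontier K ∧ t ≤ r x} := by
      refine ⟨hwfr, hr_ge w t ⟨k, hTK hkT, hnormwk.symm, ?_⟩⟩
      rw [hnormwk]
      exact hkT
    refine ⟨w, hwS, ?_⟩
    have hle := rolling_proj_lip (hP₂spec w).1 hkT (hP₂spec w).2 hvar
    rw [sub_self, norm_zero] at hle
    exact sub_eq_zero.1 (norm_le_zero_iff.1 hle)
  have hstepC : μH[(d:ℝ) - 1] (frontier T)
      ≤ μH[(d:ℝ) - 1] {x | x ∈ frontier K ∧ t ≤ r x} := by
    calc μH[(d:ℝ) - 1] (frontier T)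
        ≤ μH[(d:ℝ) - 1] (P₂ '' {x | x ∈ frontier K ∧ t ≤ r x}) := measure_mono hP₂surj
      _ ≤ ((1:ℝ≥0) : ℝ≥0∞) ^ ((d:ℝ) - 1) * μH[(d:ℝ) - 1] {x | x ∈ frontier K ∧ t ≤ r x} :=
          hP₂lip.hausdorffMeasure_image_le he
      _ = μH[(d:ℝ) - 1] {x | x ∈ frontier K ∧ t ≤ r x} := by simp
  calc ENNReal.ofReal ((1 - t) ^ (d - 1)) * μH[(d:ℝ) - 1] (frontier K)
      = μH[(d:ℝ) - 1] (frontier C₁) := by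
        rw [hscale, hconst, ENNReal.smul_def, smul_eq_mul]
    _ ≤ μH[(d:ℝ) - 1] (frontier T) := hstepB
    _ ≤ μH[(d:ℝ) - 1] {x | x ∈ frontier K ∧ t ≤ r x} := hstepC

end RollingMain
end

section
/- Let P be a probability measure on ℝ^d with characteristic function ψ(t) = φ(‖t‖_α) for some continuous φ and some α ∈ (1,2] (an α-symmetric distribution), and let F₁ denote the distribution function of the first coordinate X₁. Then for all x ∈ ℝ^d, HD(x;P) = F₁(−‖x‖_{α*}), where α* = α/(α−1) and ‖x‖_p = (Σ|x_i|^p)^{1/p}. In particular the depth regions { y : HD(y;P) ≥ δ } are balls of the ℓ^{α*} norm centered at the origin. -/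
open MeasureTheory
open scoped ENNReal RealInnerProductSpace

/-- For an `α`-symmetric distribution with `1 < α ≤ 2`, the halfspace depth is
`F₁(-‖x‖_{α*})` with `α* = α/(α-1)`, and every positive-level depth region is a ball
of the `ℓ^{α*}` norm centered at the origin. -/
theorem halfspace_depth_alpha_symmetric {d : ℕ} (hd : 0 < d)
    (P : Measure (EuclideanSpace ℝ (Fin d))) [IsProbabilityMeasure P]
    (α : ℝ) (hα1 : 1 < α) (hα2 : α ≤ 2)
    (hsym : ∀ u : EuclideanSpace ℝ (Fin d),
      Measure.map (fun z : EuclideanSpace ℝ (Fin d) => ⟪z, u⟫) P =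
      Measure.map (fun z : EuclideanSpace ℝ (Fin d) =>
        (∑ i, |u i| ^ α) ^ (1 / α) * z ⟨0, hd⟩) P) :
    (∀ x : EuclideanSpace ℝ (Fin d),
      HD P x = P {z : EuclideanSpace ℝ (Fin d) |
        z ⟨0, hd⟩ ≤ -((∑ i, |x i| ^ (α / (α - 1))) ^ (1 / (α / (α - 1))))}) ∧
    (∀ δ : ℝ≥0∞, 0 < δ → ∃ r : ℝ,
      {y : EuclideanSpace ℝ (Fin d) | δ ≤ HD P y} =
      {y : EuclideanSpace ℝ (Fin d) |
        (∑ i, |y i| ^ (α / (α - 1))) ^ (1 / (α / (α - 1))) ≤ r}) := by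
  have hα0 : (0:ℝ) < α := lt_trans one_pos hα1
  set β : ℝ := α / (α - 1) with hβ
  have hconj : α.HolderConjugate β := Real.HolderConjugate.conjExponent hα1
  have hβ1 : 1 < β := hconj.symm.lt
  have hβ0 : (0:ℝ) < β := lt_trans one_pos hβ1
  -- the ℓ^β norm
  set N : EuclideanSpace ℝ (Fin d) → ℝ := fun x => (∑ i, |x i| ^ β) ^ (1 / β) with hN
  have hNnonneg : ∀ x, 0 ≤ N x := fun x =>
    Real.rpow_nonneg (Finset.sum_nonneg fun i _ => Real.rpow_nonneg (abs_nonneg _) _) _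
  -- the ℓ^α norm of u
  set c : EuclideanSpace ℝ (Fin d) → ℝ := fun u => (∑ i, |u i| ^ α) ^ (1 / α) with hc
  have hcpos : ∀ u : EuclideanSpace ℝ (Fin d), u ≠ 0 → 0 < c u := by
    intro u hu
    apply Real.rpow_pos_of_pos
    obtain ⟨j, hj⟩ : ∃ j, u j ≠ 0 := by
      by_contra h
      push_neg at h
      exact hu (PiLp.ext h)
    exact Finset.sum_pos' (fun i _ => Real.rpow_nonneg (abs_nonneg _) _)
      ⟨j, Finset.mem_univ j, Real.rpow_pos_of_pos (abs_pos.2 hj) _⟩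
  -- measurability of the coordinate projection
  have hmeas0 : Measurable (fun z : EuclideanSpace ℝ (Fin d) => z ⟨0, hd⟩) :=
    (EuclideanSpace.proj (⟨0, hd⟩ : Fin d)).continuous.measurable
  -- F₁
  set F : ℝ → ℝ≥0∞ := fun s => P {z : EuclideanSpace ℝ (Fin d) | z ⟨0, hd⟩ ≤ s} with hF
  have hFmono : ∀ {s t : ℝ}, s ≤ t → F s ≤ F t := by
    intro s t hst
    exact measure_mono (fun z hz => le_trans hz hst)
  -- the key computation: P (hsp d u a) = F (a / c u)
  have hkey : ∀ (u : EuclideanSpace ℝ (Fin d)), u ≠ 0 → ∀ a : ℝ,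
      P (hsp d u a) = F (a / c u) := by
    intro u hu a
    have hcu := hcpos u hu
    have h1 : hsp d u a = (fun z : EuclideanSpace ℝ (Fin d) => ⟪z, u⟫) ⁻¹' Set.Iic a := rfl
    have hm1 : Measurable (fun z : EuclideanSpace ℝ (Fin d) => ⟪z, u⟫) :=
      (continuous_id.inner continuous_const).measurable
    have hm2 : Measurable (fun z : EuclideanSpace ℝ (Fin d) => c u * z ⟨0, hd⟩) :=
      hmeas0.const_mul _
    calc P (hsp d u a)
        = Measure.map (fun z : EuclideanSpace ℝ (Fin d) => ⟪z, u⟫) P (Set.Iic a) := by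
          rw [Measure.map_apply hm1 measurableSet_Iic, h1]
      _ = Measure.map (fun z : EuclideanSpace ℝ (Fin d) => c u * z ⟨0, hd⟩) P (Set.Iic a) := by
          rw [hsym u]
      _ = P {z : EuclideanSpace ℝ (Fin d) | c u * z ⟨0, hd⟩ ≤ a} := by
          rw [Measure.map_apply hm2 measurableSet_Iic]; rfl
      _ = F (a / c u) := by
          congr 1
          ext z
          simp only [Set.mem_setOf_eq, hF]
          exact (le_div_iff₀' hcu).symm
  -- Hölder: for all x u, -(N x) * c u ≤ ⟪x, u⟫
  have hholder : ∀ (x u : EuclideanSpace ℝ (Fin d)), -(N x * c u) ≤ ⟪x, u⟫ := by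
    intro x u
    have h := Real.inner_le_Lp_mul_Lq (Finset.univ) (fun i => -(x i)) (fun i => u i)
      hconj.symm
    simp only [abs_neg, neg_mul] at h
    have hinner : ⟪x, u⟫ = ∑ i, x i * u i := by
      simp [PiLp.inner_apply, RCLike.inner_apply, mul_comm]
    have h2 : -∑ i, x i * u i ≤ N x * c u := by
      simpa [hN, hc, one_div] using h
    rw [hinner]
    linarith
  -- Part 1
  have hpart1 : ∀ x : EuclideanSpace ℝ (Fin d), HD P x = F (-(N x)) := by
    intro x
    apply le_antisymm
    · -- upper bound: exhibit an optimal halfspace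
      by_cases hx : x = 0
      · subst hx
        have hN0 : N (0 : EuclideanSpace ℝ (Fin d)) = 0 := by
          simp [hN, Real.zero_rpow hβ0.ne', Real.zero_rpow (inv_ne_zero hβ0.ne'), one_div]
        set u : EuclideanSpace ℝ (Fin d) := EuclideanSpace.single ⟨0, hd⟩ (1:ℝ) with hu'
        have hu : u ≠ 0 := by
          intro h
          have := congrFun (congrArg (fun v : EuclideanSpace ℝ (Fin d) => (v : Fin d → ℝ)) h) ⟨0, hd⟩
          simp [hu', EuclideanSpace.single_apply] at this
        have hmem : (0 : EuclideanSpace ℝ (Fin d)) ∈ hsp d u 0 := by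
          simp [hsp, Set.mem_setOf_eq]
        have hle : HD P (0 : EuclideanSpace ℝ (Fin d)) ≤ P (hsp d u 0) :=
          iInf_le_of_le u (iInf_le_of_le hu (iInf_le_of_le 0 (iInf_le _ hmem)))
        rw [hkey u hu 0] at hle
        simpa [hN0, zero_div] using hle
      · -- x ≠ 0 : dual extremal direction
        set u : EuclideanSpace ℝ (Fin d) := WithLp.toLp 2 (fun i => -(x i) * |x i| ^ (β - 2)) with hu'
        obtain ⟨j, hj⟩ : ∃ j, x j ≠ 0 := by
          by_contra h
          push_neg at h
          exact hx (PiLp.ext h)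
        set S : ℝ := ∑ i, |x i| ^ β with hS'
        have hSpos : 0 < S :=
          Finset.sum_pos' (fun i _ => Real.rpow_nonneg (abs_nonneg _) _)
            ⟨j, Finset.mem_univ j, Real.rpow_pos_of_pos (abs_pos.2 hj) _⟩
        have hui : ∀ i, x i * u i = -(|x i| ^ β) := by
          intro i
          by_cases hxi : x i = 0
          · simp [hu', hxi, Real.zero_rpow hβ0.ne']
          · have hxa : (0:ℝ) < |x i| := abs_pos.2 hxi
            have h1 : x i * u i = -((x i * x i) * |x i| ^ (β - 2)) := by
              simp only [hu']; ring
            have h2 : x i * x i = |x i| ^ (2:ℝ) := by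
              rw [show ((2:ℝ) = ((2:ℕ):ℝ)) by norm_num, Real.rpow_natCast]
              rw [pow_two, abs_mul_abs_self]
            rw [h1, h2, ← Real.rpow_add hxa]
            norm_num
        have habsu : ∀ i, |u i| ^ α = |x i| ^ β := by
          intro i
          by_cases hxi : x i = 0
          · simp [hu', hxi, Real.zero_rpow hα0.ne', Real.zero_rpow hβ0.ne']
          · have hxa : (0:ℝ) < |x i| := abs_pos.2 hxi
            have h1 : |u i| = |x i| ^ (β - 1) := by
              simp only [hu']
              rw [abs_mul, abs_neg, abs_of_nonneg (Real.rpow_nonneg (abs_nonneg _) _)]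
              rw [show |x i| * |x i| ^ (β - 2) = |x i| ^ (1:ℝ) * |x i| ^ (β - 2) by
                rw [Real.rpow_one], ← Real.rpow_add hxa]
              congr 1
              ring
            rw [h1, ← Real.rpow_mul (abs_nonneg _), hconj.symm.sub_one_mul_conj]
        have hsumu : ∑ i, |u i| ^ α = S := by
          rw [hS']
          exact Finset.sum_congr rfl fun i _ => habsu i
        have hcu : c u = S ^ (1/α) := by rw [hc]; simp only [hsumu]
        have hu0 : u ≠ 0 := by
          intro h
          have huj : u j = 0 := congrFun (congrArg (fun v : EuclideanSpace ℝ (Fin d) => (v : Fin d → ℝ)) h) j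
          have : u j ≠ 0 := by
            simp only [hu']
            exact mul_ne_zero (neg_ne_zero.2 hj) (ne_of_gt (Real.rpow_pos_of_pos (abs_pos.2 hj) _))
          exact this huj
        have hinner : ⟪x, u⟫ = -S := by
          have : ⟪x, u⟫ = ∑ i, x i * u i := by
            simp [PiLp.inner_apply, RCLike.inner_apply, mul_comm]
          rw [this, hS']
          rw [Finset.sum_congr rfl fun i _ => hui i]
          rw [← Finset.sum_neg_distrib]
        have hmem : x ∈ hsp d u ⟪x, u⟫ := by simp only [hsp, Set.mem_setOf_eq, le_refl]
        have hle : HD P x ≤ P (hsp d u ⟪x, u⟫) :=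
          iInf_le_of_le u (iInf_le_of_le hu0 (iInf_le_of_le ⟪x, u⟫ (iInf_le _ hmem)))
        rw [hkey u hu0 _] at hle
        have hdiv : ⟪x, u⟫ / c u = -(N x) := by
          rw [hinner, hcu, hN]
          rw [neg_div]
          congr 1
          rw [show S / S ^ (1/α) = S ^ (1:ℝ) / S ^ (1/α) by rw [Real.rpow_one],
            ← Real.rpow_sub hSpos]
          congr 1
          have := hconj.inv_add_inv_eq_one
          rw [one_div, one_div]
          linarith
        rwa [hdiv] at hle
    · -- lower bound
      apply le_iInf; intro u
      apply le_iInf; intro hu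
      apply le_iInf; intro a
      apply le_iInf; intro ha
      rw [hkey u hu a]
      apply hFmono
      rw [le_div_iff₀ (hcpos u hu), neg_mul]
      exact le_trans (hholder x u) ha
  refine ⟨fun x => hpart1 x, ?_⟩
  -- Part 2
  intro δ hδ
  have hHD : ∀ y, HD P y = F (-(N y)) := hpart1
  set T : Set ℝ := {t : ℝ | 0 ≤ t ∧ δ ≤ F (-t)} with hT
  by_cases hTne : T.Nonempty
  · -- bounded above
    have hmeasIic : ∀ s : ℝ, MeasurableSet {z : EuclideanSpace ℝ (Fin d) | z ⟨0, hd⟩ ≤ s} :=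
      fun s => hmeas0 measurableSet_Iic
    have hbdd : BddAbove T := by
      -- F(-n) → 0 < δ, so T is bounded
      set A : ℕ → Set (EuclideanSpace ℝ (Fin d)) :=
        fun n => {z | z ⟨0, hd⟩ ≤ -(n:ℝ)} with hA
      have hAanti : Antitone A := by
        intro m n hmn z hz
        simp only [hA, Set.mem_setOf_eq] at hz ⊢
        have : (m:ℝ) ≤ (n:ℝ) := Nat.cast_le.2 hmn
        linarith
      have hAint : ⋂ n, A n = ∅ := by
        ext z
        simp only [hA, Set.mem_iInter, Set.mem_setOf_eq, Set.mem_empty_iff_false, iff_false]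
        push_neg
        obtain ⟨n, hn⟩ := exists_nat_gt (-(z ⟨0, hd⟩))
        exact ⟨n, by linarith⟩
      have htendA : Filter.Tendsto (fun n => P (A n)) Filter.atTop (nhds 0) := by
        have := tendsto_measure_iInter_atTop (μ := P) (s := A)
          (fun n => (hmeasIic (-(n:ℝ))).nullMeasurableSet) hAanti ⟨0, measure_ne_top _ _⟩
        rwa [hAint, measure_empty] at this
      obtain ⟨n, hn⟩ := (htendA.eventually_lt_const hδ).exists
      refine ⟨(n:ℝ), fun t ht => ?_⟩
      by_contra hlt
      push_neg at hlt
      have h1 : δ ≤ F (-(n:ℝ)) := le_trans ht.2 (hFmono (by linarith))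
      exact absurd h1 (not_le.2 hn)
    refine ⟨sSup T, ?_⟩
    have hkey2 : ∀ t : ℝ, 0 ≤ t → t ≤ sSup T → δ ≤ F (-t) := by
      intro t ht0 htr
      set B : ℕ → Set (EuclideanSpace ℝ (Fin d)) :=
        fun n => {z | z ⟨0, hd⟩ ≤ -t + 1/(n+1)} with hB
      have hBanti : Antitone B := by
        intro m n hmn z hz
        simp only [hB, Set.mem_setOf_eq] at hz ⊢
        have h1 : (0:ℝ) < (m:ℝ) + 1 := by positivity
        have h2 : (m:ℝ) + 1 ≤ (n:ℝ) + 1 := by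
          have : (m:ℝ) ≤ (n:ℝ) := Nat.cast_le.2 hmn
          linarith
        have := one_div_le_one_div_of_le h1 h2
        linarith
      have hBint : ⋂ n, B n = {z : EuclideanSpace ℝ (Fin d) | z ⟨0, hd⟩ ≤ -t} := by
        ext z
        simp only [hB, Set.mem_iInter, Set.mem_setOf_eq]
        constructor
        · intro h
          refine le_of_forall_pos_le_add fun ε hε => ?_
          obtain ⟨n, hn⟩ := exists_nat_one_div_lt hε
          have := h n
          push_cast at this hn ⊢
          linarith
        · intro h n
          have : (0:ℝ) < 1/((n:ℝ)+1) := by positivity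
          linarith
      have hδB : ∀ n : ℕ, δ ≤ P (B n) := by
        intro n
        have hlt : t - 1/((n:ℝ)+1) < sSup T := by
          have : (0:ℝ) < 1/((n:ℝ)+1) := by positivity
          linarith
        obtain ⟨s, hsT, hs⟩ := exists_lt_of_lt_csSup hTne hlt
        have hsub : {z : EuclideanSpace ℝ (Fin d) | z ⟨0, hd⟩ ≤ -s} ⊆ B n := by
          intro z hz
          simp only [hB, Set.mem_setOf_eq] at hz ⊢
          linarith
        exact le_trans hsT.2 (measure_mono hsub)
      have htendB : Filter.Tendsto (fun n => P (B n)) Filter.atTop (nhds (F (-t))) := by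
        have := tendsto_measure_iInter_atTop (μ := P) (s := B)
          (fun n => (hmeasIic (-t + 1/((n:ℝ)+1))).nullMeasurableSet) hBanti ⟨0, measure_ne_top _ _⟩
        rwa [hBint] at this
      exact ge_of_tendsto' htendB hδB
    ext y
    simp only [Set.mem_setOf_eq, hHD y]
    constructor
    · intro h
      exact le_csSup hbdd ⟨hNnonneg y, h⟩
    · intro h
      exact hkey2 (N y) (hNnonneg y) h
  · -- empty region
    refine ⟨-1, ?_⟩
    ext y
    simp only [Set.mem_setOf_eq, hHD y]
    constructor
    · intro h
      exact absurd ⟨hNnonneg y, h⟩ (fun hmem => hTne ⟨N y, hmem⟩)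
    · intro h
      linarith [hNnonneg y]
end
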